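/- arXiv:1711.10030 — 4 statements merged into one kernel-verified Lean document; each statement's English description precedes it below -/
import Mathlib

section
/- Let X be a real Banach space and H a real Hilbert space. If F : X → H is a C¹ mapping such that (d1) for every y ∈ H the functional φ : X → ℝ given by φ(x) := (1/2)‖F(x) − y‖_H² satisfies the Palais–Smale condition, and (d2) for every x ∈ X the derivative F′(x) is injective and surjective onto H (F′(x)[X] = H), then F is a diffeomorphism. -/
open Filter Topology Set

section ISWAux



theorem my_ekeland {M : Type*} [MetricSpace M] [CompleteSpace M]
    (f : M → ℝ) (hf : Continuous f) (hbd : BddBelow (Set.range f))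
    {lam : ℝ} (hlam : 0 < lam) (x₀ : M) :
    ∃ xb : M, f xb ≤ f x₀ ∧ ∀ z, f xb - lam * dist z xb ≤ f z := by
  classical
  set S : M → Set M := fun x => {z | f z + lam * dist z x ≤ f x} with hS
  have hxS : ∀ x, x ∈ S x := by
    intro x; simp [hS]
  have htrans : ∀ x z w, z ∈ S x → w ∈ S z → w ∈ S x := by
    intro x z w hz hw
    simp only [hS, Set.mem_setOf_eq] at *
    have htri : dist w x ≤ dist w z + dist z x := dist_triangle w z x
    nlinarith [dist_nonneg (x := w) (y := z), dist_nonneg (x := z) (y := x)]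
  have hfle : ∀ x z, z ∈ S x → f z ≤ f x := by
    intro x z hz
    simp only [hS, Set.mem_setOf_eq] at hz
    nlinarith [dist_nonneg (x := z) (y := x)]
  have hne : ∀ x, (f '' S x).Nonempty := fun x => ⟨f x, x, hxS x, rfl⟩
  have hbdd : ∀ x, BddBelow (f '' S x) := by
    intro x
    obtain ⟨B, hB⟩ := hbd
    exact ⟨B, fun v ⟨z, _, hz⟩ => hz ▸ hB ⟨z, rfl⟩⟩
  have step : ∀ x (n : ℕ), ∃ z, z ∈ S x ∧ f z ≤ sInf (f '' S x) + (1/2)^n := by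
    intro x n
    have : sInf (f '' S x) < sInf (f '' S x) + (1/2)^n := by
      have : (0:ℝ) < (1/2)^n := by positivity
      linarith
    obtain ⟨v, ⟨z, hzS, rfl⟩, hvlt⟩ := exists_lt_of_csInf_lt (hne x) this
    exact ⟨z, hzS, le_of_lt hvlt⟩
  -- the sequence
  let seq : ℕ → M := fun n => Nat.rec x₀ (fun n xn => Classical.choose (step xn n)) n
  have hseq0 : seq 0 = x₀ := rfl
  have hseqS : ∀ n, seq (n+1) ∈ S (seq n) := fun n => (Classical.choose_spec (step (seq n) n)).1
  have hseqV : ∀ n, f (seq (n+1)) ≤ sInf (f '' S (seq n)) + (1/2)^n :=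
    fun n => (Classical.choose_spec (step (seq n) n)).2
  have hmono : ∀ m n, m ≤ n → seq n ∈ S (seq m) := by
    intro m n hmn
    induction n with
    | zero => simp_all [Nat.le_zero.mp hmn, hxS]
    | succ k ih =>
      rcases Nat.lt_or_ge m (k+1) with h | h
      · exact htrans _ _ _ (ih (Nat.lt_succ_iff.mp h)) (hseqS k)
      · have : m = k + 1 := le_antisymm hmn h
        subst this; exact hxS _
  -- cauchy
  have hsum : Summable (fun n => dist (seq n) (seq (n+1))) := by
    obtain ⟨B, hB⟩ := hbd
    have hBle : ∀ x, B ≤ f x := fun x => hB ⟨x, rfl⟩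
    apply summable_of_sum_range_le (c := (f x₀ - B) / lam)
      (fun n => dist_nonneg)
    intro n
    have key : ∀ k, dist (seq k) (seq (k+1)) ≤ (f (seq k) - f (seq (k+1))) / lam := by
      intro k
      have := hseqS k
      simp only [hS, Set.mem_setOf_eq] at this
      rw [dist_comm]
      rw [le_div_iff₀ hlam]
      nlinarith
    calc ∑ i ∈ Finset.range n, dist (seq i) (seq (i+1))
        ≤ ∑ i ∈ Finset.range n, (f (seq i) - f (seq (i+1))) / lam :=
          Finset.sum_le_sum (fun i _ => key i)
      _ = (f (seq 0) - f (seq n)) / lam := by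
          rw [← Finset.sum_div]
          congr 1
          exact Finset.sum_range_sub' (fun i => f (seq i)) n
      _ ≤ (f x₀ - B) / lam := by
          have h1 := hBle (seq n)
          rw [hseq0]
          gcongr
  have hcauchy : CauchySeq seq := cauchySeq_of_summable_dist hsum
  obtain ⟨xb, hxb⟩ := cauchySeq_tendsto_of_complete hcauchy
  have hSclosed : ∀ x, IsClosed (S x) := by
    intro x
    have h1 : Continuous fun z => f z + lam * dist z x :=
      hf.add (continuous_const.mul (continuous_id.dist continuous_const))
    exact isClosed_le h1 continuous_const
  have hxbS : ∀ n, xb ∈ S (seq n) := by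
    intro n
    refine (hSclosed (seq n)).mem_of_tendsto hxb ?_
    filter_upwards [eventually_ge_atTop n] with m hm
    exact hmono n m hm
  refine ⟨xb, ?_, ?_⟩
  · have := hfle _ _ (hxbS 0); rwa [hseq0] at this
  · intro z
    by_contra hcon
    push_neg at hcon
    have hzS : ∀ n, z ∈ S (seq n) := by
      intro n
      refine htrans _ xb _ (hxbS n) ?_
      simp only [hS, Set.mem_setOf_eq]
      linarith
    have hfxb_le : ∀ n : ℕ, f xb ≤ f z + (1/2)^n := by
      intro n
      have h1 : sInf (f '' S (seq n)) ≤ f z := csInf_le (hbdd _) ⟨z, hzS n, rfl⟩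
      have h2 := hseqV n
      have h3 := hfle _ _ (hxbS (n+1))
      linarith
    have hlim : Tendsto (fun n : ℕ => f z + (1/2:ℝ)^n) atTop (nhds (f z)) := by
      have : Tendsto (fun n : ℕ => ((1:ℝ)/2)^n) atTop (nhds 0) := by
        apply tendsto_pow_atTop_nhds_zero_of_lt_one <;> norm_num
      simpa using tendsto_const_nhds.add this
    have : f xb ≤ f z := ge_of_tendsto hlim (Eventually.of_forall hfxb_le)
    have hd : 0 ≤ lam * dist z xb := by positivity
    linarith



variable {X H : Type*} [NormedAddCommGroup X] [NormedSpace ℝ X]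
  [NormedAddCommGroup H] [InnerProductSpace ℝ H]

lemma hasFDerivAt_half_norm_sq {F : X → H} (hF : Differentiable ℝ F) (y : H) (x : X) :
    HasFDerivAt (fun z => (1/2:ℝ) * ‖F z - y‖^2)
      ((innerSL ℝ (F x - y)).comp (fderiv ℝ F x)) x := by
  have hg : HasFDerivAt (fun z => F z - y) (fderiv ℝ F x) x :=
    ((hF x).hasFDerivAt).sub_const y
  have hinner := (hg.inner ℝ hg).const_mul (1/2 : ℝ)
  have hfun : (fun z => (1/2:ℝ) * (inner ℝ (F z - y) (F z - y) : ℝ))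
      = (fun z => (1/2:ℝ) * ‖F z - y‖^2) := by
    funext z; rw [real_inner_self_eq_norm_sq]
  rw [hfun] at hinner
  refine hinner.congr_fderiv ?_
  ext v
  simp only [ContinuousLinearMap.coe_comp', Function.comp_apply, innerSL_apply_apply,
    ContinuousLinearMap.coe_smul', Pi.smul_apply, smul_eq_mul,
    ContinuousLinearMap.comp_apply, fderivInnerCLM_apply, ContinuousLinearMap.prod_apply]
  rw [real_inner_comm (fderiv ℝ F x v) (F x - y)]
  ring

lemma norm_fderiv_le_of_almost_min {φ : X → ℝ} {D : X →L[ℝ] ℝ} {x : X}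
    (hd : HasFDerivAt φ D x) {lam : ℝ} (hlam : 0 ≤ lam)
    (h : ∀ z, φ x - lam * dist z x ≤ φ z) : ‖D‖ ≤ lam := by
  have key : ∀ v : X, -(lam * ‖v‖) ≤ D v := by
    intro v
    have hline : HasDerivAt (fun t : ℝ => x + t • v) v 0 := by
      simpa using ((hasDerivAt_id (0:ℝ)).smul_const v).const_add x
    have hx0 : x + (0:ℝ) • v = x := by simp
    have hg : HasDerivAt (fun t : ℝ => φ (x + t • v)) (D v) 0 := by
      have hd' : HasFDerivAt φ D (x + (0:ℝ) • v) := by rw [hx0]; exact hd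
      exact hd'.comp_hasDerivAt 0 hline
    have hslope := hasDerivAt_iff_tendsto_slope.mp hg
    have hslope' : Tendsto (slope (fun t : ℝ => φ (x + t • v)) 0) (𝓝[>] 0) (𝓝 (D v)) :=
      hslope.mono_left (nhdsWithin_mono 0 (fun t ht => ne_of_gt ht))
    refine ge_of_tendsto hslope' ?_
    filter_upwards [self_mem_nhdsWithin] with t (ht : 0 < t)
    have hdist : dist (x + t • v) x = t * ‖v‖ := by
      rw [dist_eq_norm]
      simp [norm_smul, abs_of_pos ht]
    have hb := h (x + t • v)
    rw [hdist] at hb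
    have : slope (fun t : ℝ => φ (x + t • v)) 0 t
        = (φ (x + t • v) - φ x) / t := by
      simp [slope_def_field, div_eq_inv_mul]
    rw [this, le_div_iff₀ ht]
    nlinarith
  refine D.opNorm_le_bound hlam (fun v => ?_)
  rw [Real.norm_eq_abs, abs_le]
  constructor
  · have := key v; linarith
  · have := key (-v)
    rw [map_neg, norm_neg] at this
    linarith



section Helpers

variable {X : Type*} [NormedAddCommGroup X] [NormedSpace ℝ X]

/-- Uniform continuity near a compact set. -/
lemma unif_cont_near_compact {E : Type*} [MetricSpace E] {f : X → E}
    (hf : Continuous f) {K : Set X} (hK : IsCompact K) (hKne : K.Nonempty)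
    {ε : ℝ} (hε : 0 < ε) :
    ∃ δ > 0, ∀ x ∈ K, ∀ z : X, dist z x < δ → dist (f z) (f x) < ε := by
  classical
  have hr : ∀ x : X, ∃ r > 0, ∀ z ∈ Metric.ball x (2*r), dist (f z) (f x) < ε/2 := by
    intro x
    obtain ⟨r, hrp, hball⟩ := Metric.continuousAt_iff.mp hf.continuousAt (ε/2) (by linarith)
    exact ⟨r/2, by linarith, fun z hz => hball (by
      rw [Metric.mem_ball] at hz; linarith)⟩
  choose r hrpos hrball using hr
  obtain ⟨T, hTcover⟩ := hK.elim_finite_subcover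
    (fun x : K => Metric.ball (x : X) (r x)) (fun x => Metric.isOpen_ball)
    (fun x hx => Set.mem_iUnion.mpr ⟨⟨x, hx⟩, Metric.mem_ball_self (hrpos x)⟩)
  obtain ⟨x₀, hx₀⟩ := hKne
  have hTne : T.Nonempty := by
    rcases Set.mem_iUnion₂.mp (hTcover hx₀) with ⟨i, hi, _⟩
    exact ⟨i, hi⟩
  set δ := T.inf' hTne (fun i => r i) with hδ
  have hδpos : 0 < δ := by
    rw [hδ, Finset.lt_inf'_iff]
    exact fun i _ => hrpos i
  refine ⟨δ, hδpos, fun x hx z hz => ?_⟩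
  rcases Set.mem_iUnion₂.mp (hTcover hx) with ⟨i, hiT, hxball⟩
  rw [Metric.mem_ball] at hxball
  have hδle : δ ≤ r i := Finset.inf'_le _ hiT
  have hzball : z ∈ Metric.ball (i : X) (2 * r i) := by
    rw [Metric.mem_ball]
    calc dist z (i : X) ≤ dist z x + dist x (i : X) := dist_triangle _ _ _
      _ < δ + r i := by linarith
      _ ≤ 2 * r i := by linarith
  have h1 := hrball i z hzball
  have h2 := hrball i x (by rw [Metric.mem_ball]; linarith)
  calc dist (f z) (f x) ≤ dist (f z) (f (i:X)) + dist (f (i:X)) (f x) := dist_triangle _ _ _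
    _ < ε/2 + ε/2 := by rw [dist_comm (f (i:X)) (f x)]; exact add_lt_add h1 h2
    _ = ε := by ring

/-- From `δ < ‖D‖` extract an almost-maximizing direction. -/
lemma exists_unit_dir {D : X →L[ℝ] ℝ} {δ : ℝ} (h : δ < ‖D‖) :
    ∃ w : X, ‖w‖ ≤ 1 ∧ δ < D w := by
  obtain ⟨x, hx1, hxd⟩ := D.exists_lt_apply_of_lt_opNorm h
  rcases le_or_gt (D x) 0 with hneg | hpos
  · refine ⟨-x, by rw [norm_neg]; linarith, ?_⟩
    rw [map_neg]
    rw [Real.norm_eq_abs, abs_of_nonpos hneg] at hxd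
    linarith
  · refine ⟨x, le_of_lt hx1, ?_⟩
    rw [Real.norm_eq_abs, abs_of_pos hpos] at hxd
    linarith

/-- Quantitative first-order estimate via the mean value inequality. -/
lemma key_decrease (φ : X → ℝ) (hφ : ContDiff ℝ 1 φ) (x w : X) (s C : ℝ)
    (hs : 0 ≤ s) (hC : 0 ≤ C) (hw : ‖w‖ ≤ 1)
    (hbound : ∀ τ ∈ Set.Icc (0:ℝ) s, ‖fderiv ℝ φ (x - τ • w) - fderiv ℝ φ x‖ ≤ C) :
    φ (x - s • w) ≤ φ x - s * (fderiv ℝ φ x) w + s * C := by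
  have hdiff : Differentiable ℝ φ := hφ.differentiable one_ne_zero
  set ψ : ℝ → ℝ := fun τ => φ (x - τ • w) + τ * (fderiv ℝ φ x) w with hψ
  have hderiv : ∀ τ ∈ Set.Icc (0:ℝ) s, HasDerivWithinAt ψ
      (-(fderiv ℝ φ (x - τ • w) w) + (fderiv ℝ φ x) w) (Set.Icc 0 s) τ := by
    intro τ _
    have hline : HasDerivAt (fun τ : ℝ => x - τ • w) (-w) τ := by
      simpa using (((hasDerivAt_id τ).smul_const w).const_sub x)
    have hcomp : HasDerivAt (fun τ : ℝ => φ (x - τ • w))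
        (-(fderiv ℝ φ (x - τ • w) w)) τ := by
      have := (hdiff (x - τ • w)).hasFDerivAt.comp_hasDerivAt τ hline
      rw [map_neg] at this
      exact this
    exact ((hcomp.add (hasDerivAt_mul_const ((fderiv ℝ φ x) w))).hasDerivWithinAt)
  have hbd : ∀ τ ∈ Set.Icc (0:ℝ) s,
      ‖-(fderiv ℝ φ (x - τ • w) w) + (fderiv ℝ φ x) w‖ ≤ C := by
    intro τ hτ
    have : -(fderiv ℝ φ (x - τ • w) w) + (fderiv ℝ φ x) w
        = (fderiv ℝ φ x - fderiv ℝ φ (x - τ • w)) w := by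
      simp [ContinuousLinearMap.sub_apply]; ring
    rw [this]
    calc ‖(fderiv ℝ φ x - fderiv ℝ φ (x - τ • w)) w‖
        ≤ ‖fderiv ℝ φ x - fderiv ℝ φ (x - τ • w)‖ * ‖w‖ :=
          (fderiv ℝ φ x - fderiv ℝ φ (x - τ • w)).le_opNorm w
      _ ≤ C * 1 := by
          apply mul_le_mul ?_ hw (norm_nonneg w) hC
          rw [norm_sub_rev]
          exact hbound τ hτ
      _ = C := mul_one C
  have hmvt := Convex.norm_image_sub_le_of_norm_hasDerivWithin_le
    hderiv hbd (convex_Icc 0 s) (Set.left_mem_Icc.mpr hs) (Set.right_mem_Icc.mpr hs)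
  have h0 : ψ 0 = φ x := by simp [hψ]
  have hsv : ψ s = φ (x - s • w) + s * (fderiv ℝ φ x) w := rfl
  rw [h0, hsv, Real.norm_eq_abs] at hmvt
  have habs := abs_le.mp hmvt
  have : ‖s - 0‖ = s := by rw [sub_zero, Real.norm_eq_abs, abs_of_nonneg hs]
  rw [this] at hmvt
  have h2 := (abs_le.mp hmvt).2
  linarith

end Helpers


variable {X : Type*} [NormedAddCommGroup X] [NormedSpace ℝ X]

lemma deformation (φ : X → ℝ) (hφ : ContDiff ℝ 1 φ) (γ : C(unitInterval, X)) {c ε δ : ℝ}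
    (hε : 0 < ε) (hδ : 0 < δ)
    (h0 : φ (γ 0) ≤ c - 2*ε) (h1 : φ (γ 1) ≤ c - 2*ε)
    (hc : c ≤ ⨆ t, φ (γ t))
    (hgrad : ∀ t, c - 2*ε ≤ φ (γ t) → δ < ‖fderiv ℝ φ (γ t)‖) :
    ∃ (γ' : C(unitInterval, X)) (s : ℝ), 0 < s ∧ γ' 0 = γ 0 ∧ γ' 1 = γ 1 ∧
      (∀ t, dist (γ' t) (γ t) ≤ s) ∧
      (∀ t, φ (γ' t) ≤ (⨆ u, φ (γ u)) - s * δ / 2) := by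
  classical
  have hφc : Continuous φ := hφ.continuous
  have hDc : Continuous (fderiv ℝ φ) := hφ.continuous_fderiv one_ne_zero
  -- directions
  have hv : ∀ t : unitInterval, ∃ w : X, ‖w‖ ≤ 1 ∧
      (c - 2*ε ≤ φ (γ t) → δ < (fderiv ℝ φ (γ t)) w) := by
    intro t
    by_cases ht : c - 2*ε ≤ φ (γ t)
    · obtain ⟨w, hw1, hw2⟩ := exists_unit_dir (hgrad t ht)
      exact ⟨w, hw1, fun _ => hw2⟩
    · exact ⟨0, by simp, fun h => absurd h ht⟩
  choose v hv1 hv2 using hv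
  set A : Set unitInterval := {u | c - 2*ε ≤ φ (γ u)} with hA
  have hAclosed : IsClosed A := isClosed_le continuous_const (hφc.comp γ.continuous)
  have hAcomp : IsCompact A := hAclosed.isCompact
  set U : unitInterval → Set unitInterval :=
    fun t => {u | δ < (fderiv ℝ φ (γ u)) (v t)} with hU
  have hUopen : ∀ t, IsOpen (U t) := by
    intro t
    have hcont : Continuous fun u : unitInterval => (fderiv ℝ φ (γ u)) (v t) :=
      (ContinuousLinearMap.apply ℝ ℝ (v t)).continuous.comp (hDc.comp γ.continuous)
    exact isOpen_lt continuous_const hcont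
  obtain ⟨T, hT⟩ := hAcomp.elim_finite_subcover (fun t : A => U (t : unitInterval))
    (fun t => hUopen _) (fun u hu => Set.mem_iUnion.mpr ⟨⟨u, hu⟩, hv2 u hu⟩)
  have hcov : A ⊆ ⋃ i : {i : A // i ∈ T}, U ((i : A) : unitInterval) := by
    intro u hu
    rcases Set.mem_iUnion₂.mp (hT hu) with ⟨i, hi, hui⟩
    exact Set.mem_iUnion.mpr ⟨⟨i, hi⟩, hui⟩
  obtain ⟨f, hfsub⟩ := PartitionOfUnity.exists_isSubordinate hAclosed
    (fun i : {i : A // i ∈ T} => U ((i : A) : unitInterval))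
    (fun i => hUopen _) hcov
  set V : unitInterval → X :=
    fun u => ∑ i : {i : A // i ∈ T}, f i u • v ((i : A) : unitInterval) with hV
  have hVcont : Continuous V := by
    apply continuous_finset_sum
    intro i _
    exact ((f i).continuous).smul continuous_const
  have hfsum : ∀ u : unitInterval, ∑ i : {i : A // i ∈ T}, f i u ≤ 1 := by
    intro u
    have := f.sum_le_one u
    rwa [finsum_eq_sum_of_fintype] at this
  have hfsum1 : ∀ u ∈ A, ∑ i : {i : A // i ∈ T}, f i u = 1 := by
    intro u hu
    have := f.sum_eq_one hu
    rwa [finsum_eq_sum_of_fintype] at this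
  have hVnorm : ∀ u, ‖V u‖ ≤ 1 := by
    intro u
    calc ‖V u‖ ≤ ∑ i : {i : A // i ∈ T}, ‖f i u • v ((i : A) : unitInterval)‖ :=
          norm_sum_le _ _
      _ ≤ ∑ i : {i : A // i ∈ T}, f i u := by
          apply Finset.sum_le_sum
          intro i _
          rw [norm_smul, Real.norm_eq_abs, abs_of_nonneg (f.nonneg i u)]
          calc f i u * ‖v ((i : A) : unitInterval)‖ ≤ f i u * 1 :=
                mul_le_mul_of_nonneg_left (hv1 _) (f.nonneg i u)
            _ = f i u := mul_one _
      _ ≤ 1 := hfsum u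
  have hVgrad : ∀ u ∈ A, δ ≤ (fderiv ℝ φ (γ u)) (V u) := by
    intro u hu
    have hmap : (fderiv ℝ φ (γ u)) (V u)
        = ∑ i : {i : A // i ∈ T}, f i u * (fderiv ℝ φ (γ u)) (v ((i : A) : unitInterval)) := by
      rw [hV, map_sum]
      congr 1
      funext i
      rw [map_smul, smul_eq_mul]
    rw [hmap]
    have hterm : ∀ i : {i : A // i ∈ T}, f i u * δ ≤
        f i u * (fderiv ℝ φ (γ u)) (v ((i : A) : unitInterval)) := by
      intro i
      by_cases hz : f i u = 0
      · simp [hz]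
      · have hus : u ∈ tsupport (f i) := subset_closure (by simpa [Function.mem_support] using hz)
        have huU : u ∈ U ((i : A) : unitInterval) := hfsub i hus
        exact mul_le_mul_of_nonneg_left (le_of_lt huU) (f.nonneg i u)
    calc δ = (∑ i : {i : A // i ∈ T}, f i u) * δ := by rw [hfsum1 u hu, one_mul]
      _ = ∑ i : {i : A // i ∈ T}, f i u * δ := by rw [Finset.sum_mul]
      _ ≤ _ := Finset.sum_le_sum (fun i _ => hterm i)
  -- cutoff
  set η : unitInterval → ℝ := fun u => max 0 (min 1 ((φ (γ u) - (c - 2*ε))/ε)) with hη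
  have hηcont : Continuous η :=
    continuous_const.max (continuous_const.min
      (((hφc.comp γ.continuous).sub continuous_const).div_const ε))
  have hη0le : ∀ u, 0 ≤ η u := fun u => le_max_left _ _
  have hηle1 : ∀ u, η u ≤ 1 := fun u => max_le zero_le_one (min_le_left _ _)
  have hηzero : ∀ u, φ (γ u) ≤ c - 2*ε → η u = 0 := by
    intro u hu
    have hq : (φ (γ u) - (c - 2*ε))/ε ≤ 0 :=
      div_nonpos_of_nonpos_of_nonneg (by linarith) hε.le
    exact max_eq_left ((min_le_right _ _).trans hq)
  have hηone : ∀ u, c - ε ≤ φ (γ u) → η u = 1 := by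
    intro u hu
    have h1 : (1:ℝ) ≤ (φ (γ u) - (c - 2*ε))/ε := by
      rw [le_div_iff₀ hε]; linarith
    show max 0 (min 1 ((φ (γ u) - (c - 2*ε))/ε)) = 1
    rw [min_eq_left h1]
    exact max_eq_right zero_le_one
  -- uniform continuity of the derivative near the range of γ
  have hKcomp : IsCompact (Set.range γ) := isCompact_range γ.continuous
  obtain ⟨δ₂, hδ₂pos, hδ₂⟩ := unif_cont_near_compact hDc hKcomp ⟨γ 0, ⟨0, rfl⟩⟩
    (show (0:ℝ) < δ/4 by linarith)
  set s := min (δ₂/2) (ε/δ) with hs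
  have hspos : 0 < s := lt_min (by linarith) (div_pos hε hδ)
  have hsδε : s * δ ≤ ε := by
    have : s ≤ ε/δ := min_le_right _ _
    calc s * δ ≤ (ε/δ) * δ := mul_le_mul_of_nonneg_right this hδ.le
      _ = ε := div_mul_cancel₀ ε (ne_of_gt hδ)
  have hsδ₂ : s < δ₂ := (min_le_left _ _).trans_lt (by linarith)
  -- the deformed path
  set γ' : C(unitInterval, X) :=
    ⟨fun u => γ u - (s * η u) • V u,
      γ.continuous.sub ((continuous_const.mul hηcont).smul hVcont)⟩ with hγ'
  have hγ'app : ∀ u, γ' u = γ u - (s * η u) • V u := fun u => rfl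
  -- sup of φ ∘ γ
  have hbdd : BddAbove (Set.range fun u => φ (γ u)) :=
    (isCompact_range ((hφc.comp γ.continuous))).bddAbove
  have hΨ : ∀ u, φ (γ u) ≤ ⨆ u, φ (γ u) := fun u => le_ciSup hbdd u
  refine ⟨γ', s, hspos, ?_, ?_, ?_, ?_⟩
  · rw [hγ'app, hηzero 0 h0]; simp
  · rw [hγ'app, hηzero 1 h1]; simp
  · intro t
    rw [hγ'app, dist_eq_norm]
    simp only [sub_sub_cancel_left, norm_neg]
    rw [norm_smul, Real.norm_eq_abs, abs_of_nonneg (by positivity)]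
    calc s * η t * ‖V t‖ ≤ s * 1 * 1 := by
          apply mul_le_mul ?_ (hVnorm t) (norm_nonneg _) (by positivity)
          rw [mul_one]
          exact mul_le_of_le_one_right hspos.le (hηle1 t)
      _ = s := by ring
  · intro t
    by_cases hAt : c - 2*ε ≤ φ (γ t)
    · -- key estimate
      have hw : ‖η t • V t‖ ≤ 1 := by
        rw [norm_smul, Real.norm_eq_abs, abs_of_nonneg (hη0le t)]
        exact mul_le_one₀ (hηle1 t) (norm_nonneg _) (hVnorm t)
      have hbound : ∀ τ ∈ Set.Icc (0:ℝ) s,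
          ‖fderiv ℝ φ (γ t - τ • (η t • V t)) - fderiv ℝ φ (γ t)‖ ≤ δ/4 := by
        intro τ hτ
        have hdist : dist (γ t - τ • (η t • V t)) (γ t) < δ₂ := by
          rw [dist_eq_norm]
          simp only [sub_sub_cancel_left, norm_neg]
          rw [norm_smul, Real.norm_eq_abs, abs_of_nonneg hτ.1]
          calc τ * ‖η t • V t‖ ≤ s * 1 :=
                mul_le_mul hτ.2 hw (norm_nonneg _) hspos.le
            _ < δ₂ := by rw [mul_one]; exact hsδ₂
        have := hδ₂ (γ t) ⟨t, rfl⟩ _ hdist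
        rw [dist_eq_norm] at this
        linarith
      have hkey := key_decrease φ hφ (γ t) (η t • V t) s (δ/4) hspos.le
        (by linarith) hw hbound
      have hsm : (s * η t) • V t = s • (η t • V t) := by rw [smul_smul]
      rw [hγ'app, hsm]
      have hgradV : η t * δ ≤ (fderiv ℝ φ (γ t)) (η t • V t) := by
        rw [map_smul, smul_eq_mul]
        exact mul_le_mul_of_nonneg_left (hVgrad t hAt) (hη0le t)
      by_cases hAt1 : c - ε ≤ φ (γ t)
      · have hgv' : δ ≤ (fderiv ℝ φ (γ t)) (η t • V t) := by
          calc δ = η t * δ := by rw [hηone t hAt1]; ring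
            _ ≤ _ := hgradV
        have h2 := hΨ t
        nlinarith
      · push_neg at hAt1
        have h2 := hΨ t
        have h3 : (0:ℝ) ≤ η t * δ := by positivity
        have hcle := hc
        nlinarith
    · push_neg at hAt
      have hz := hηzero t hAt.le
      rw [hγ'app, hz]
      simp only [mul_zero, zero_smul, sub_zero]
      have h2 := hΨ t
      have hcle := hc
      nlinarith


end ISWAux

section ISWMain

open Filter Topology

variable {X H : Type*} [NormedAddCommGroup X] [NormedSpace ℝ X] [CompleteSpace X]
  [NormedAddCommGroup H] [InnerProductSpace ℝ H] [CompleteSpace H]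

lemma phi_contDiff (F : X → H) (hF : ContDiff ℝ 1 F) (y : H) :
    ContDiff ℝ 1 (fun z : X => (1/2:ℝ) * ‖F z - y‖^2) := by
  have h1 : ContDiff ℝ 1 (fun z : X => (1/2:ℝ) * (inner ℝ (F z - y) (F z - y) : ℝ)) :=
    contDiff_const.mul ((hF.sub contDiff_const).inner ℝ (hF.sub contDiff_const))
  convert h1 using 2 with z
  rw [real_inner_self_eq_norm_sq]

lemma crit_point (F : X → H) (hF : ContDiff ℝ 1 F)
    (hd2 : ∀ x : X, Function.Bijective (fderiv ℝ F x)) (y : H) (x : X)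
    (h : fderiv ℝ (fun z : X => (1/2:ℝ) * ‖F z - y‖^2) x = 0) : F x = y := by
  have hD := (hasFDerivAt_half_norm_sq (hF.differentiable one_ne_zero) y x).fderiv
  rw [hD] at h
  obtain ⟨u, hu⟩ := (hd2 x).2 (F x - y)
  have happ := congrFun (congrArg (fun (T : X →L[ℝ] ℝ) => (T : X → ℝ)) h) u
  simp only [ContinuousLinearMap.coe_comp', Function.comp_apply, innerSL_apply_apply,
    ContinuousLinearMap.zero_apply, hu] at happ
  have : F x - y = 0 := inner_self_eq_zero.mp happ
  rw [sub_eq_zero] at this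
  exact this

lemma ps_limit (F : X → H) (hF : ContDiff ℝ 1 F)
    (hPS : ∀ y : H, ∀ x : ℕ → X,
      (∃ C : ℝ, ∀ n : ℕ, |(1/2 : ℝ) * ‖F (x n) - y‖^2| ≤ C) →
      Filter.Tendsto
        (fun n => ‖fderiv ℝ (fun z : X => (1/2 : ℝ) * ‖F z - y‖^2) (x n)‖)
        Filter.atTop (nhds 0) →
      ∃ (z : X) (σ : ℕ → ℕ), StrictMono σ ∧
        Filter.Tendsto (fun k => x (σ k)) Filter.atTop (nhds z))
    (hd2 : ∀ x : X, Function.Bijective (fderiv ℝ F x))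
    (y : H) (xs : ℕ → X) (C : ℝ)
    (hb : ∀ n, (1/2:ℝ) * ‖F (xs n) - y‖^2 ≤ C)
    (hgrad : Tendsto (fun n => ‖fderiv ℝ (fun z : X => (1/2:ℝ) * ‖F z - y‖^2) (xs n)‖)
      atTop (nhds 0)) :
    ∃ (z : X) (σ : ℕ → ℕ), F z = y ∧ StrictMono σ ∧
      Tendsto (fun k => xs (σ k)) atTop (nhds z) := by
  obtain ⟨z, σ, hσ, hconv⟩ := hPS y xs
    ⟨C, fun n => by rw [abs_of_nonneg (by positivity)]; exact hb n⟩ hgrad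
  refine ⟨z, σ, ?_, hσ, hconv⟩
  -- the limit is a critical point
  have hφC := phi_contDiff F hF y
  have hDcont : Continuous (fun x => fderiv ℝ (fun z : X => (1/2:ℝ) * ‖F z - y‖^2) x) :=
    hφC.continuous_fderiv one_ne_zero
  have h1 : Tendsto (fun k => fderiv ℝ (fun z : X => (1/2:ℝ) * ‖F z - y‖^2) (xs (σ k)))
      atTop (nhds (fderiv ℝ (fun z : X => (1/2:ℝ) * ‖F z - y‖^2) z)) :=
    (hDcont.tendsto z).comp hconv
  have h2 : Tendsto (fun k => ‖fderiv ℝ (fun z : X => (1/2:ℝ) * ‖F z - y‖^2) (xs (σ k))‖)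
      atTop (nhds ‖fderiv ℝ (fun z : X => (1/2:ℝ) * ‖F z - y‖^2) z‖) :=
    (continuous_norm.tendsto _).comp h1
  have h3 : Tendsto (fun k => ‖fderiv ℝ (fun z : X => (1/2:ℝ) * ‖F z - y‖^2) (xs (σ k))‖)
      atTop (nhds 0) := hgrad.comp (hσ.tendsto_atTop)
  have h4 : ‖fderiv ℝ (fun z : X => (1/2:ℝ) * ‖F z - y‖^2) z‖ = 0 :=
    tendsto_nhds_unique h2 h3
  exact crit_point F hF hd2 y z (norm_eq_zero.mp h4)

end ISWMain

section ISWMain2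

open Filter Topology

variable {X H : Type*} [NormedAddCommGroup X] [NormedSpace ℝ X] [CompleteSpace X]
  [NormedAddCommGroup H] [InnerProductSpace ℝ H] [CompleteSpace H]

lemma isw_surj (F : X → H) (hF : ContDiff ℝ 1 F)
    (hPS : ∀ y : H, ∀ x : ℕ → X,
      (∃ C : ℝ, ∀ n : ℕ, |(1/2 : ℝ) * ‖F (x n) - y‖^2| ≤ C) →
      Filter.Tendsto
        (fun n => ‖fderiv ℝ (fun z : X => (1/2 : ℝ) * ‖F z - y‖^2) (x n)‖)
        Filter.atTop (nhds 0) →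
      ∃ (z : X) (σ : ℕ → ℕ), StrictMono σ ∧
        Filter.Tendsto (fun k => x (σ k)) Filter.atTop (nhds z))
    (hd2 : ∀ x : X, Function.Bijective (fderiv ℝ F x)) :
    Function.Surjective F := by
  intro y
  have hφC := phi_contDiff F hF y
  have hφcont : Continuous (fun z : X => (1/2:ℝ) * ‖F z - y‖^2) := hφC.continuous
  have hbdd : BddBelow (Set.range (fun z : X => (1/2:ℝ) * ‖F z - y‖^2)) :=
    ⟨0, fun v ⟨x, hx⟩ => hx ▸ by positivity⟩
  have hek : ∀ n : ℕ, ∃ xb : X, (1/2:ℝ) * ‖F xb - y‖^2 ≤ (1/2:ℝ) * ‖F 0 - y‖^2 ∧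
      ∀ z, (1/2:ℝ) * ‖F xb - y‖^2 - (1/((n:ℝ)+1)) * dist z xb ≤ (1/2:ℝ) * ‖F z - y‖^2 :=
    fun n => my_ekeland _ hφcont hbdd (by positivity) 0
  choose xs h1 h2 using hek
  have hD : ∀ n, ‖fderiv ℝ (fun z : X => (1/2:ℝ) * ‖F z - y‖^2) (xs n)‖ ≤ 1/((n:ℝ)+1) :=
    fun n => norm_fderiv_le_of_almost_min
      ((hφC.differentiable one_ne_zero (xs n)).hasFDerivAt) (by positivity) (h2 n)
  have htend : Tendsto (fun n => ‖fderiv ℝ (fun z : X => (1/2:ℝ) * ‖F z - y‖^2) (xs n)‖)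
      atTop (nhds 0) :=
    squeeze_zero (fun n => norm_nonneg _) hD tendsto_one_div_add_atTop_nhds_zero_nat
  obtain ⟨z, σ, hFz, _, _⟩ := ps_limit F hF hPS hd2 y xs _ h1 htend
  exact ⟨z, hFz⟩

end ISWMain2

section ISWMain3

open Filter Topology

variable {X H : Type*} [NormedAddCommGroup X] [NormedSpace ℝ X] [CompleteSpace X]
  [NormedAddCommGroup H] [InnerProductSpace ℝ H] [CompleteSpace H]

lemma isw_inj (F : X → H) (hF : ContDiff ℝ 1 F)
    (hPS : ∀ y : H, ∀ x : ℕ → X,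
      (∃ C : ℝ, ∀ n : ℕ, |(1/2 : ℝ) * ‖F (x n) - y‖^2| ≤ C) →
      Filter.Tendsto
        (fun n => ‖fderiv ℝ (fun z : X => (1/2 : ℝ) * ‖F z - y‖^2) (x n)‖)
        Filter.atTop (nhds 0) →
      ∃ (z : X) (σ : ℕ → ℕ), StrictMono σ ∧
        Filter.Tendsto (fun k => x (σ k)) Filter.atTop (nhds z))
    (hd2 : ∀ x : X, Function.Bijective (fderiv ℝ F x)) :
    Function.Injective F := by
  intro a b hab
  by_contra hne
  set φ : X → ℝ := fun z => (1/2:ℝ) * ‖F z - F b‖^2 with hφdef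
  have hφC : ContDiff ℝ 1 φ := phi_contDiff F hF (F b)
  have hφcont : Continuous φ := hφC.continuous
  have hφa : φ a = 0 := by simp [hφdef, hab]
  -- local lower bound near a
  have hder : HasFDerivAt F (fderiv ℝ F a) a := (hF.differentiable one_ne_zero a).hasFDerivAt
  set e : X ≃L[ℝ] H := ContinuousLinearEquiv.ofBijective (fderiv ℝ F a)
      (LinearMap.ker_eq_bot.mpr (hd2 a).1) (LinearMap.range_eq_top.mpr (hd2 a).2) with he
  have heapp : ∀ u : X, e u = fderiv ℝ F a u := fun u => by
    rw [he]; rfl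
  set K := ‖(e.symm : H →L[ℝ] X)‖ with hK
  have hKb : ∀ u : X, ‖u‖ ≤ K * ‖fderiv ℝ F a u‖ := by
    intro u
    conv_lhs => rw [← e.symm_apply_apply u]
    calc ‖e.symm (e u)‖ ≤ K * ‖e u‖ := (e.symm : H →L[ℝ] X).le_opNorm (e u)
      _ = K * ‖fderiv ℝ F a u‖ := by rw [heapp]
  have hKpos : 0 < K := by
    by_contra hc
    push_neg at hc
    have h1 := hKb (b - a)
    have h2 : ‖b - a‖ ≤ 0 :=
      h1.trans (mul_nonpos_of_nonpos_of_nonneg hc (norm_nonneg _))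
    have h3 : b - a = 0 := norm_le_zero_iff.mp h2
    exact hne (by rw [sub_eq_zero] at h3; exact h3.symm)
  have hlo := hder.isLittleO
  have hev := hlo.def (show (0:ℝ) < 1/(2*K) by positivity)
  obtain ⟨r, hrpos, hr⟩ := Metric.eventually_nhds_iff.mp hev
  have hdistab : 0 < dist b a := dist_pos.mpr (fun h => hne h.symm)
  set r₀ : ℝ := min (r/2) (dist b a / 2) with hr₀
  have hr₀pos : 0 < r₀ := lt_min (by linarith) (by linarith)
  have hlow : ∀ x : X, ‖x - a‖ = r₀ → (1/(2*K)) * r₀ ≤ ‖F x - F b‖ := by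
    intro x hx
    have hxa : dist x a < r := by
      rw [dist_eq_norm, hx]
      calc r₀ ≤ r/2 := min_le_left _ _
        _ < r := by linarith
    have h1 := hr hxa
    rw [hx] at h1
    have h2 := hKb (x - a)
    rw [hx] at h2
    have h3 : r₀/K ≤ ‖fderiv ℝ F a (x - a)‖ := (div_le_iff₀ hKpos).mpr (by linarith)
    have h4 : ‖fderiv ℝ F a (x - a)‖
        ≤ ‖F x - F a‖ + ‖F x - F a - fderiv ℝ F a (x - a)‖ := by
      calc ‖fderiv ℝ F a (x - a)‖
          = ‖(F x - F a) - (F x - F a - fderiv ℝ F a (x - a))‖ := by congr 1; abel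
        _ ≤ _ := norm_sub_le _ _
    have h5 : (1:ℝ)/(2*K)*r₀ + (1/(2*K))*r₀ = r₀/K := by field_simp; ring
    rw [← hab]
    linarith
  set ρ : ℝ := (1/2) * ((1/(2*K)) * r₀)^2 with hρ
  have hρpos : 0 < ρ := by positivity
  have hsphere : ∀ x : X, ‖x - a‖ = r₀ → ρ ≤ φ x := by
    intro x hx
    have h1 := hlow x hx
    have h0 : (0:ℝ) ≤ (1/(2*K)) * r₀ := by positivity
    rw [hρ, hφdef]
    have := sq_le_sq' (by linarith) h1
    nlinarith [norm_nonneg (F x - F b)]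
  -- path space
  set Γset : Set C(unitInterval, X) := {γ | γ 0 = a ∧ γ 1 = b} with hΓ
  have hΓclosed : IsClosed Γset := by
    have h1 : IsClosed {γ : C(unitInterval,X) | γ 0 = a} :=
      isClosed_eq (continuous_eval_const 0) continuous_const
    have h2 : IsClosed {γ : C(unitInterval,X) | γ 1 = b} :=
      isClosed_eq (continuous_eval_const 1) continuous_const
    exact h1.inter h2
  haveI : CompleteSpace Γset := hΓclosed.completeSpace_coe
  -- the max functional
  set Ψ : C(unitInterval, X) → ℝ := fun γ => ⨆ t, φ (γ t) with hΨdef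
  have hbddγ : ∀ γ : C(unitInterval,X), BddAbove (Set.range fun t => φ (γ t)) :=
    fun γ => (isCompact_range ((hφcont.comp γ.continuous))).bddAbove
  have hΨle : ∀ (γ : C(unitInterval,X)) t, φ (γ t) ≤ Ψ γ := fun γ t => le_ciSup (hbddγ γ) t
  have hΨatt : ∀ γ : C(unitInterval,X), ∃ t₀, Ψ γ = φ (γ t₀) := by
    intro γ
    obtain ⟨t₀, -, hmax⟩ := isCompact_univ.exists_isMaxOn Set.univ_nonempty
      ((hφcont.comp γ.continuous)).continuousOn
    exact ⟨t₀, le_antisymm (ciSup_le fun u => hmax (Set.mem_univ u)) (hΨle γ t₀)⟩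
  have hΨcont : Continuous Ψ := by
    rw [continuous_iff_continuousAt]
    intro γ₀
    rw [Metric.continuousAt_iff]
    intro ε' hε'
    obtain ⟨d, hdpos, hd⟩ := unif_cont_near_compact hφcont (isCompact_range γ₀.continuous)
      ⟨γ₀ 0, 0, rfl⟩ (show (0:ℝ) < ε'/2 by linarith)
    refine ⟨d, hdpos, fun {γ} hγd => ?_⟩
    have hpt : ∀ t, |φ (γ t) - φ (γ₀ t)| < ε'/2 := by
      intro t
      have h1 : dist (γ t) (γ₀ t) < d :=
        lt_of_le_of_lt (ContinuousMap.dist_apply_le_dist t) hγd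
      have := hd (γ₀ t) ⟨t, rfl⟩ (γ t) h1
      rwa [Real.dist_eq] at this
    obtain ⟨t1, ht1⟩ := hΨatt γ
    obtain ⟨t2, ht2⟩ := hΨatt γ₀
    rw [Real.dist_eq, abs_sub_lt_iff]
    constructor
    · have hb1 := hΨle γ₀ t1
      have hb2 := (abs_lt.mp (hpt t1)).2
      rw [ht1]; linarith
    · have hb1 := hΨle γ t2
      have hb2 := (abs_lt.mp (hpt t2)).1
      rw [ht2]; linarith
  -- Γ nonempty
  have hseg : ∃ γ : C(unitInterval, X), γ 0 = a ∧ γ 1 = b := by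
    refine ⟨⟨fun t => a + (t:ℝ) • (b - a),
      continuous_const.add (continuous_subtype_val.smul continuous_const)⟩, ?_, ?_⟩
    · simp
    · simp
  obtain ⟨γseg, hseg0, hseg1⟩ := hseg
  haveI hΓne : Nonempty Γset := ⟨⟨γseg, hseg0, hseg1⟩⟩
  set cI : ℝ := ⨅ γ : Γset, Ψ γ.val with hcI
  have hlowerΓ : ∀ γ : Γset, ρ ≤ Ψ γ.val := by
    intro γ
    have hgc : Continuous (fun t : unitInterval => ‖γ.val t - a‖) :=
      (γ.val.continuous.sub continuous_const).norm
    have hmem : r₀ ∈ Set.Icc ‖γ.val 0 - a‖ ‖γ.val 1 - a‖ := by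
      rw [γ.prop.1, γ.prop.2]
      constructor
      · simp [hr₀pos.le]
      · have h1 : r₀ ≤ dist b a / 2 := min_le_right _ _
        rw [dist_eq_norm] at h1
        have h2 : (0:ℝ) ≤ ‖b - a‖ := norm_nonneg _
        linarith
    obtain ⟨t, ht⟩ := intermediate_value_univ (0 : unitInterval) 1 hgc hmem
    exact (hsphere (γ.val t) ht).trans (hΨle γ.val t)
  have hbddΓ : BddBelow (Set.range fun γ : Γset => Ψ γ.val) :=
    ⟨ρ, fun v ⟨γ, hγ⟩ => hγ ▸ hlowerΓ γ⟩
  have hcρ : ρ ≤ cI := le_ciInf hlowerΓ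
  have hcpos : 0 < cI := lt_of_lt_of_le hρpos hcρ
  have hcle : ∀ γ : Γset, cI ≤ Ψ γ.val := fun γ => ciInf_le hbddΓ γ
  -- produce the almost-critical sequence at level cI
  have hexseq : ∀ n : ℕ, ∃ x : X, cI/2 ≤ φ x ∧ φ x ≤ cI + 1 ∧
      ‖fderiv ℝ φ x‖ ≤ 3/((n:ℝ)+1) := by
    intro n
    set lam : ℝ := 1/((n:ℝ)+1) with hlam
    have hlampos : 0 < lam := by positivity
    have hlam1 : lam ≤ 1 := by
      rw [hlam, div_le_one (by positivity)]
      simp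
    have h1 : cI < cI + lam := by linarith
    obtain ⟨γ₀, hγ₀⟩ := exists_lt_of_ciInf_lt (f := fun γ : Γset => Ψ γ.val) h1
    obtain ⟨γb, hγb1, hγb2⟩ := my_ekeland (fun γ : Γset => Ψ γ.val)
      (hΨcont.comp continuous_subtype_val) hbddΓ hlampos γ₀
    by_contra hcon
    push_neg at hcon
    have h3lam : 3*lam = 3/((n:ℝ)+1) := by rw [hlam]; ring
    have hgrad : ∀ t, cI - 2*(cI/4) ≤ φ (γb.val t) → 3*lam < ‖fderiv ℝ φ (γb.val t)‖ := by
      intro t ht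
      have hA : cI/2 ≤ φ (γb.val t) := by linarith
      have hB : φ (γb.val t) ≤ cI + 1 := by
        have hx1 := hΨle γb.val t
        have hx2 : Ψ γb.val ≤ cI + lam := hγb1.trans hγ₀.le
        linarith
      have := hcon _ hA hB
      linarith [h3lam ▸ this]
    obtain ⟨γ', s, hspos, he0, he1, hdistp, hbound⟩ := deformation φ hφC γb.val
      (show (0:ℝ) < cI/4 by linarith) (show (0:ℝ) < 3*lam by linarith)
      (by rw [γb.prop.1, hφa]; linarith)
      (by have : φ (γb.val 1) = 0 := by rw [γb.prop.2]; simp [hφdef]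
          rw [this]; linarith)
      (hcle γb) hgrad
    set z : Γset := ⟨γ', he0.trans γb.prop.1, he1.trans γb.prop.2⟩ with hz
    have hdistz : dist z γb ≤ s := by
      rw [Subtype.dist_eq]
      exact (ContinuousMap.dist_le hspos.le).mpr hdistp
    have hΨz : Ψ γ' ≤ Ψ γb.val - s*(3*lam)/2 := ciSup_le (fun t => hbound t)
    have hek := hγb2 z
    have hltr : lam * dist z γb ≤ lam * s := mul_le_mul_of_nonneg_left hdistz hlampos.le
    have hzval : Ψ (z : C(unitInterval, X)) = Ψ γ' := rfl
    rw [hzval] at hek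
    nlinarith
  choose xs hxs1 hxs2 hxs3 using hexseq
  have htend : Tendsto (fun n => ‖fderiv ℝ φ (xs n)‖) atTop (nhds 0) := by
    apply squeeze_zero (fun n => norm_nonneg _) hxs3
    have h1 : Tendsto (fun n : ℕ => 1/((n:ℝ)+1)) atTop (nhds 0) :=
      tendsto_one_div_add_atTop_nhds_zero_nat
    have := h1.const_mul (3:ℝ)
    simp only [mul_zero] at this
    convert this using 2 with n
    ring
  obtain ⟨z, σ, hFz, hσ, hconv⟩ := ps_limit F hF hPS hd2 (F b) xs (cI + 1) hxs2 htend
  have hφz : φ z = 0 := by simp [hφdef, hFz]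
  have hge : cI/2 ≤ φ z := by
    have hc2 : Tendsto (fun k => φ (xs (σ k))) atTop (nhds (φ z)) :=
      (hφcont.tendsto z).comp hconv
    exact ge_of_tendsto hc2 (Filter.Eventually.of_forall fun k => hxs1 (σ k))
  rw [hφz] at hge
  linarith

end ISWMain3


/-- **Idczak–Skowron–Walczak global diffeomorphism theorem.**
Let `X` be a real Banach space and `H` a real Hilbert space.  If `F : X → H` is `C¹` and
(d1) for every `y ∈ H` the functional `φ x = ½‖F x − y‖²` satisfies the Palais–Smale
condition (every sequence with `φ(xₙ)` bounded and `φ′(xₙ) → 0` in `X*` has a convergent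
subsequence), and
(d2) for every `x ∈ X` the derivative `F′(x)` is injective and surjective onto `H`,
then `F` is a diffeomorphism: bijective with a `C¹` inverse. -/
theorem idczak_skowron_walczak_global_diffeomorphism
    {X H : Type*} [NormedAddCommGroup X] [NormedSpace ℝ X] [CompleteSpace X]
    [NormedAddCommGroup H] [InnerProductSpace ℝ H] [CompleteSpace H]
    (F : X → H) (hF : ContDiff ℝ 1 F)
    (hPS : ∀ y : H, ∀ x : ℕ → X,
      (∃ C : ℝ, ∀ n : ℕ, |(1/2 : ℝ) * ‖F (x n) - y‖^2| ≤ C) →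
      Filter.Tendsto
        (fun n => ‖fderiv ℝ (fun z : X => (1/2 : ℝ) * ‖F z - y‖^2) (x n)‖)
        Filter.atTop (nhds 0) →
      ∃ (z : X) (σ : ℕ → ℕ), StrictMono σ ∧
        Filter.Tendsto (fun k => x (σ k)) Filter.atTop (nhds z))
    (hd2 : ∀ x : X, Function.Bijective (fderiv ℝ F x)) :
    Function.Bijective F ∧
      ∃ G : H → X, Function.LeftInverse G F ∧ Function.RightInverse G F ∧ ContDiff ℝ 1 G := by
  have hinj := isw_inj F hF hPS hd2
  have hsurj := isw_surj F hF hPS hd2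
  refine ⟨⟨hinj, hsurj⟩, Function.invFun F, Function.leftInverse_invFun hinj,
    Function.rightInverse_invFun hsurj, ?_⟩
  rw [contDiff_iff_contDiffAt]
  intro y
  set x := Function.invFun F y with hx
  have hFy : F x = y := Function.rightInverse_invFun hsurj y
  set e : X ≃L[ℝ] H := ContinuousLinearEquiv.ofBijective (fderiv ℝ F x)
      (LinearMap.ker_eq_bot.mpr (hd2 x).1) (LinearMap.range_eq_top.mpr (hd2 x).2) with he
  have hder : HasFDerivAt F ((e : X →L[ℝ] H)) x := by
    have hcoe : (e : X →L[ℝ] H) = fderiv ℝ F x := ContinuousLinearEquiv.coe_ofBijective _ _ _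
    rw [hcoe]
    exact (hF.differentiable one_ne_zero x).hasFDerivAt
  have hCA : ContDiffAt ℝ 1 F x := hF.contDiffAt
  have hloc : ContDiffAt ℝ 1 (hCA.localInverse (f' := e) hder one_ne_zero) (F x) :=
    hCA.to_localInverse (f' := e) hder one_ne_zero
  have hev : ∀ᶠ y' in nhds (F x), F (hCA.localInverse (f' := e) hder one_ne_zero y') = y' :=
    (hCA.hasStrictFDerivAt' hder one_ne_zero).eventually_right_inverse
  have heq : Function.invFun F =ᶠ[nhds (F x)] hCA.localInverse (f' := e) hder one_ne_zero := by
    filter_upwards [hev] with y' hy'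
    apply hinj
    rw [hy']
    exact Function.rightInverse_invFun hsurj y'
  have : ContDiffAt ℝ 1 (Function.invFun F) (F x) := hloc.congr_of_eventuallyEq heq
  rwa [hFy] at this
end

section
/- Assume f : [0,1] × ℝ → ℝ satisfies C(c): f is continuous on [0,1] × ℝ and has a continuous partial derivative f_x with respect to the second variable. Fix y ∈ L²(0,1). Then the functional φ : 𝕏 → ℝ defined by φ(x) := (1/2)∫₀¹ |ẍ(t) − f(t,x(t)) − y(t)|² dt is of class C¹, with derivative at any x ∈ 𝕏 given by φ′(x)h = ∫₀¹ (ẍ(t) − f(t,x(t)) − y(t)) (ḧ(t) − f_x(t,x(t)) h(t)) dt for all h ∈ 𝕏. -/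
open MeasureTheory Set Filter

/-- Lebesgue measure restricted to `(0,1]`; `L²(0,1)` is `Lp ℝ 2 mu01`. -/
noncomputable def mu01 : Measure ℝ := volume.restrict (Set.Ioc (0:ℝ) 1)

/-- The space `𝕏 = H²(0,1) ∩ H¹₀(0,1)`, normed by `‖x‖_𝕏 = ‖ẍ‖_{L²}`, is isometrically
parametrised by `u = ẍ ∈ L²(0,1)`:  given `u`, `PP u` is the unique function `x` with
`ẍ = u` a.e. and `x(0) = x(1) = 0`, namely
`x(t) = ∫₀ᵗ ∫₀ˢ u(r) dr ds − t ∫₀¹ ∫₀ˢ u(r) dr ds`. -/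
noncomputable def PP (u : Lp ℝ 2 mu01) (t : ℝ) : ℝ :=
  (∫ s in (0:ℝ)..t, ∫ r in (0:ℝ)..s, u r) - t * ∫ s in (0:ℝ)..1, ∫ r in (0:ℝ)..s, u r

open scoped Classical in
/-- The element of `L²(0,1)` determined by a (square-integrable) function `g`. -/
noncomputable def toL2 (g : ℝ → ℝ) : Lp ℝ 2 mu01 :=
  if hg : MemLp g 2 mu01 then hg.toLp g else 0

/-- The solution operator `T : 𝕏 → L²(0,1)`, `(T x)(t) = ẍ(t) − f(t, x(t))`, expressed
through the parametrisation `x = PP u`, `ẍ = u` of `𝕏` by `u ∈ L²(0,1)`. -/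
noncomputable def Tmap (f : ℝ → ℝ → ℝ) (u : Lp ℝ 2 mu01) : Lp ℝ 2 mu01 :=
  u - toL2 (fun t => f t (PP u t))

/-- The functional `φ : 𝕏 → ℝ`, `φ(x) = ½ ∫₀¹ |ẍ(t) − f(t,x(t)) − y(t)|² dt`, in the
parametrisation of `𝕏` by `u = ẍ ∈ L²(0,1)` (so `x = PP u`). -/
noncomputable def phi (f : ℝ → ℝ → ℝ) (y : ℝ → ℝ) (u : Lp ℝ 2 mu01) : ℝ :=
  (1/2 : ℝ) * ∫ t in (0:ℝ)..1, (u t - f t (PP u t) - y t)^2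

open scoped ENNReal

lemma mu01_def : mu01 = volume.restrict (Set.Ioc (0:ℝ) 1) := rfl

instance : IsProbabilityMeasure mu01 := ⟨by simp [mu01]⟩

/-- raw version of `PP` -/
noncomputable def PPf (w : ℝ → ℝ) (t : ℝ) : ℝ :=
  (∫ s in (0:ℝ)..t, ∫ r in (0:ℝ)..s, w r) - t * ∫ s in (0:ℝ)..1, ∫ r in (0:ℝ)..s, w r

lemma PP_eq_PPf (u : Lp ℝ 2 mu01) : PP u = PPf (↑↑u) := rfl

noncomputable def Fw (w : ℝ → ℝ) (s : ℝ) : ℝ := ∫ r in (0:ℝ)..s, w r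

lemma PPf_eq (w : ℝ → ℝ) (t : ℝ) :
    PPf w t = (∫ s in (0:ℝ)..t, Fw w s) - t * ∫ s in (0:ℝ)..1, Fw w s := rfl

noncomputable def Iabs (w : ℝ → ℝ) : ℝ := ∫ r in Ioc (0:ℝ) 1, |w r|

lemma Iabs_nonneg (w : ℝ → ℝ) : 0 ≤ Iabs w :=
  integral_nonneg fun r => abs_nonneg _

lemma Lp.intOn (u : Lp ℝ 2 mu01) : IntegrableOn (↑↑u) (Ioc (0:ℝ) 1) volume := by
  exact (Lp.memLp u).integrable (by norm_num : (1:ℝ≥0∞) ≤ 2)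

lemma Iabs_le_norm (u : Lp ℝ 2 mu01) : Iabs (↑↑u) ≤ ‖u‖ := by
  have h1 : ENNReal.ofReal (∫ r, ‖(↑↑u : ℝ → ℝ) r‖ ∂mu01) = ∫⁻ r, ‖(↑↑u : ℝ → ℝ) r‖ₑ ∂mu01 :=
    ofReal_integral_norm_eq_lintegral_enorm ((Lp.memLp u).integrable (by norm_num))
  rw [← eLpNorm_one_eq_lintegral_enorm] at h1
  have h4 : ENNReal.ofReal (∫ r, ‖(↑↑u : ℝ → ℝ) r‖ ∂mu01) ≤ ENNReal.ofReal ‖u‖ := by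
    rw [h1, Lp.norm_def, ENNReal.ofReal_toReal (Lp.eLpNorm_ne_top u)]
    exact eLpNorm_le_eLpNorm_of_exponent_le (by norm_num) (Lp.aestronglyMeasurable u)
  have h5 : (∫ r, ‖(↑↑u : ℝ → ℝ) r‖ ∂mu01) ≤ ‖u‖ :=
    (ENNReal.ofReal_le_ofReal_iff (norm_nonneg u)).1 h4
  exact h5

lemma Fw_bound {w : ℝ → ℝ} (hw : IntegrableOn w (Ioc (0:ℝ) 1) volume) {s : ℝ}
    (hs : s ∈ Icc (0:ℝ) 1) : |Fw w s| ≤ Iabs w := by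
  rw [Fw, intervalIntegral.integral_of_le hs.1]
  simp only [← Real.norm_eq_abs]
  calc ‖∫ r in Ioc (0:ℝ) s, w r‖ ≤ ∫ r in Ioc (0:ℝ) s, ‖w r‖ :=
        norm_integral_le_integral_norm _
  _ ≤ ∫ r in Ioc (0:ℝ) 1, ‖w r‖ := by
      apply setIntegral_mono_set hw.norm
      · exact Eventually.of_forall fun r => abs_nonneg _
      · exact HasSubset.Subset.eventuallyLE (Ioc_subset_Ioc_right hs.2)
  _ = Iabs w := by simp only [Iabs, Real.norm_eq_abs]

lemma PPf_bound {w : ℝ → ℝ} (hw : IntegrableOn w (Ioc (0:ℝ) 1) volume) {t : ℝ}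
    (ht : t ∈ Icc (0:ℝ) 1) : |PPf w t| ≤ 2 * Iabs w := by
  have h1 : ‖∫ s in (0:ℝ)..t, Fw w s‖ ≤ Iabs w * |t - 0| := by
    apply intervalIntegral.norm_integral_le_of_norm_le_const
    intro x hx
    rw [uIoc_of_le ht.1] at hx
    rw [Real.norm_eq_abs]
    exact Fw_bound hw ⟨hx.1.le, hx.2.trans ht.2⟩
  have h2 : ‖∫ s in (0:ℝ)..1, Fw w s‖ ≤ Iabs w * |1 - 0| := by
    apply intervalIntegral.norm_integral_le_of_norm_le_const
    intro x hx
    rw [uIoc_of_le zero_le_one] at hx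
    rw [Real.norm_eq_abs]
    exact Fw_bound hw ⟨hx.1.le, hx.2⟩
  simp only [Real.norm_eq_abs, sub_zero, abs_one, mul_one] at h1 h2
  have ht0 : |t| ≤ 1 := abs_le.2 ⟨by linarith [ht.1], ht.2⟩
  have key : |PPf w t| ≤ |∫ s in (0:ℝ)..t, Fw w s| + |t| * |∫ s in (0:ℝ)..1, Fw w s| := by
    calc |PPf w t| = |(∫ s in (0:ℝ)..t, Fw w s) + -(t * ∫ s in (0:ℝ)..1, Fw w s)| := by
          rw [PPf_eq, sub_eq_add_neg]
    _ ≤ |∫ s in (0:ℝ)..t, Fw w s| + |-(t * ∫ s in (0:ℝ)..1, Fw w s)| := abs_add_le _ _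
    _ = |∫ s in (0:ℝ)..t, Fw w s| + |t| * |∫ s in (0:ℝ)..1, Fw w s| := by
          rw [abs_neg, abs_mul]
  nlinarith [Iabs_nonneg w, abs_nonneg t, abs_nonneg (∫ s in (0:ℝ)..t, Fw w s),
    abs_nonneg (∫ s in (0:ℝ)..1, Fw w s)]

lemma PP_bound (u : Lp ℝ 2 mu01) {t : ℝ} (ht : t ∈ Icc (0:ℝ) 1) :
    |PP u t| ≤ 2 * ‖u‖ := by
  rw [PP_eq_PPf]
  exact (PPf_bound (Lp.intOn u) ht).trans (by linarith [Iabs_le_norm u])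


lemma Fw_contOn {w : ℝ → ℝ} (hw : IntegrableOn w (Ioc (0:ℝ) 1) volume) :
    ContinuousOn (Fw w) (Icc (0:ℝ) 1) := by
  have h : IntegrableOn w (uIcc (0:ℝ) 1) volume := by
    rw [uIcc_of_le zero_le_one, integrableOn_Icc_iff_integrableOn_Ioc]
    exact hw
  have := intervalIntegral.continuousOn_primitive_interval h
  rwa [uIcc_of_le zero_le_one] at this

lemma Fw_intOn {w : ℝ → ℝ} (hw : IntegrableOn w (Ioc (0:ℝ) 1) volume) :
    IntegrableOn (Fw w) (Icc (0:ℝ) 1) volume :=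
  (Fw_contOn hw).integrableOn_Icc

lemma Fw_intvInt {w : ℝ → ℝ} (hw : IntegrableOn w (Ioc (0:ℝ) 1) volume) {t : ℝ}
    (ht : t ∈ Icc (0:ℝ) 1) : IntervalIntegrable (Fw w) volume 0 t :=
  ((Fw_contOn hw).mono (Icc_subset_Icc le_rfl ht.2)).intervalIntegrable_of_Icc ht.1

lemma PPf_contOn {w : ℝ → ℝ} (hw : IntegrableOn w (Ioc (0:ℝ) 1) volume) :
    ContinuousOn (PPf w) (Icc (0:ℝ) 1) := by
  have h : IntegrableOn (Fw w) (uIcc (0:ℝ) 1) volume := by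
    rw [uIcc_of_le zero_le_one]; exact Fw_intOn hw
  have h1 : ContinuousOn (fun t => ∫ s in (0:ℝ)..t, Fw w s) (Icc (0:ℝ) 1) := by
    have := intervalIntegral.continuousOn_primitive_interval h
    rwa [uIcc_of_le zero_le_one] at this
  have h2 : ContinuousOn (fun t : ℝ => t * ∫ s in (0:ℝ)..1, Fw w s) (Icc (0:ℝ) 1) :=
    (continuousOn_id.mul continuousOn_const)
  exact h1.sub h2

lemma PP_contOn (u : Lp ℝ 2 mu01) : ContinuousOn (PP u) (Icc (0:ℝ) 1) := by
  rw [PP_eq_PPf]; exact PPf_contOn (Lp.intOn u)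

lemma Fw_congr {w1 w2 : ℝ → ℝ} (h : w1 =ᵐ[mu01] w2) {s : ℝ} (hs : s ∈ Icc (0:ℝ) 1) :
    Fw w1 s = Fw w2 s := by
  rw [Fw, Fw, intervalIntegral.integral_of_le hs.1, intervalIntegral.integral_of_le hs.1]
  apply integral_congr_ae
  rw [mu01_def] at h
  exact ae_restrict_of_ae_restrict_of_subset (Ioc_subset_Ioc_right hs.2) h

lemma PPf_congr {w1 w2 : ℝ → ℝ} (h : w1 =ᵐ[mu01] w2) {t : ℝ} (ht : t ∈ Icc (0:ℝ) 1) :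
    PPf w1 t = PPf w2 t := by
  rw [PPf_eq, PPf_eq]
  have h1 : ∀ t' ∈ Icc (0:ℝ) 1, (∫ s in (0:ℝ)..t', Fw w1 s) = ∫ s in (0:ℝ)..t', Fw w2 s := by
    intro t' ht'
    apply intervalIntegral.integral_congr
    intro s hs
    rw [uIcc_of_le ht'.1] at hs
    exact Fw_congr h ⟨hs.1, hs.2.trans ht'.2⟩
  rw [h1 t ht, h1 1 (by norm_num)]

lemma Fw_add {w1 w2 : ℝ → ℝ} (h1 : IntegrableOn w1 (Ioc (0:ℝ) 1) volume)
    (h2 : IntegrableOn w2 (Ioc (0:ℝ) 1) volume) {s : ℝ} (hs : s ∈ Icc (0:ℝ) 1) :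
    Fw (fun r => w1 r + w2 r) s = Fw w1 s + Fw w2 s := by
  have i1 : IntervalIntegrable w1 volume 0 s :=
    (intervalIntegrable_iff_integrableOn_Ioc_of_le hs.1).2
      (h1.mono_set (Ioc_subset_Ioc_right hs.2))
  have i2 : IntervalIntegrable w2 volume 0 s :=
    (intervalIntegrable_iff_integrableOn_Ioc_of_le hs.1).2
      (h2.mono_set (Ioc_subset_Ioc_right hs.2))
  exact intervalIntegral.integral_add i1 i2

lemma PPf_add {w1 w2 : ℝ → ℝ} (h1 : IntegrableOn w1 (Ioc (0:ℝ) 1) volume)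
    (h2 : IntegrableOn w2 (Ioc (0:ℝ) 1) volume) {t : ℝ} (ht : t ∈ Icc (0:ℝ) 1) :
    PPf (fun r => w1 r + w2 r) t = PPf w1 t + PPf w2 t := by
  have key : ∀ t' ∈ Icc (0:ℝ) 1, (∫ s in (0:ℝ)..t', Fw (fun r => w1 r + w2 r) s)
      = (∫ s in (0:ℝ)..t', Fw w1 s) + ∫ s in (0:ℝ)..t', Fw w2 s := by
    intro t' ht'
    rw [← intervalIntegral.integral_add (Fw_intvInt h1 ht') (Fw_intvInt h2 ht')]
    apply intervalIntegral.integral_congr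
    intro s hs
    rw [uIcc_of_le ht'.1] at hs
    exact Fw_add h1 h2 ⟨hs.1, hs.2.trans ht'.2⟩
  rw [PPf_eq, PPf_eq, PPf_eq, key t ht, key 1 (by norm_num)]
  ring

lemma Fw_smul (c : ℝ) (w : ℝ → ℝ) (s : ℝ) : Fw (fun r => c * w r) s = c * Fw w s := by
  rw [Fw, Fw, intervalIntegral.integral_const_mul]

lemma PPf_smul (c : ℝ) (w : ℝ → ℝ) (t : ℝ) : PPf (fun r => c * w r) t = c * PPf w t := by
  have key : ∀ t' : ℝ, (∫ s in (0:ℝ)..t', Fw (fun r => c * w r) s)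
      = c * ∫ s in (0:ℝ)..t', Fw w s := by
    intro t'
    rw [← intervalIntegral.integral_const_mul]
    apply intervalIntegral.integral_congr
    intro s _
    exact Fw_smul c w s
  rw [PPf_eq, PPf_eq, key t, key 1]
  ring

lemma PP_add (u v : Lp ℝ 2 mu01) {t : ℝ} (ht : t ∈ Icc (0:ℝ) 1) :
    PP (u + v) t = PP u t + PP v t := by
  rw [PP_eq_PPf, PP_eq_PPf, PP_eq_PPf]
  have h : (↑↑(u + v) : ℝ → ℝ) =ᵐ[mu01] fun r => (↑↑u : ℝ → ℝ) r + (↑↑v : ℝ → ℝ) r :=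
    Lp.coeFn_add u v
  rw [PPf_congr h ht]
  exact PPf_add (Lp.intOn u) (Lp.intOn v) ht

lemma PP_smul (c : ℝ) (u : Lp ℝ 2 mu01) {t : ℝ} (ht : t ∈ Icc (0:ℝ) 1) :
    PP (c • u) t = c * PP u t := by
  rw [PP_eq_PPf, PP_eq_PPf]
  have h : (↑↑(c • u) : ℝ → ℝ) =ᵐ[mu01] fun r => c * (↑↑u : ℝ → ℝ) r := Lp.coeFn_smul c u
  rw [PPf_congr h ht]
  exact PPf_smul c (↑↑u) t

lemma PP_sub (u v : Lp ℝ 2 mu01) {t : ℝ} (ht : t ∈ Icc (0:ℝ) 1) :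
    PP (u - v) t = PP u t - PP v t := by
  have : u - v = u + (-1 : ℝ) • v := by rw [neg_one_smul]; abel
  rw [this, PP_add u _ ht, PP_smul (-1) v ht]
  ring

lemma memL2_of_contOn {g : ℝ → ℝ} (hg : ContinuousOn g (Icc (0:ℝ) 1)) :
    MemLp g 2 mu01 := by
  obtain ⟨C, hC⟩ := (isCompact_Icc : IsCompact (Icc (0:ℝ) 1)).exists_bound_of_continuousOn hg
  have hm : AEStronglyMeasurable g mu01 := by
    rw [mu01_def]
    exact (hg.mono Ioc_subset_Icc_self).aestronglyMeasurable measurableSet_Ioc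
  refine MemLp.of_bound hm C ?_
  rw [mu01_def]
  rw [ae_restrict_iff' measurableSet_Ioc]
  exact Eventually.of_forall fun t ht => hC t (Ioc_subset_Icc_self ht)

lemma toL2_of_mem {g : ℝ → ℝ} (hg : MemLp g 2 mu01) : toL2 g = hg.toLp g := by
  rw [toL2, dif_pos hg]

lemma toL2_coe {g : ℝ → ℝ} (hg : MemLp g 2 mu01) : (↑↑(toL2 g) : ℝ → ℝ) =ᵐ[mu01] g := by
  rw [toL2_of_mem hg]; exact hg.coeFn_toLp

lemma toL2_congr {g1 g2 : ℝ → ℝ} (hg1 : MemLp g1 2 mu01) (h : g1 =ᵐ[mu01] g2) :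
    toL2 g1 = toL2 g2 := by
  rw [toL2_of_mem hg1, toL2_of_mem (hg1.ae_eq h)]
  exact MemLp.toLp_congr _ _ h

lemma toL2_add {g1 g2 : ℝ → ℝ} (hg1 : MemLp g1 2 mu01) (hg2 : MemLp g2 2 mu01) :
    toL2 (fun t => g1 t + g2 t) = toL2 g1 + toL2 g2 := by
  show toL2 (g1 + g2) = toL2 g1 + toL2 g2
  rw [toL2_of_mem hg1, toL2_of_mem hg2, toL2_of_mem ((hg1.add hg2) : MemLp (g1 + g2) 2 mu01)]
  exact MemLp.toLp_add hg1 hg2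

lemma toL2_sub {g1 g2 : ℝ → ℝ} (hg1 : MemLp g1 2 mu01) (hg2 : MemLp g2 2 mu01) :
    toL2 (fun t => g1 t - g2 t) = toL2 g1 - toL2 g2 := by
  show toL2 (g1 - g2) = toL2 g1 - toL2 g2
  rw [toL2_of_mem hg1, toL2_of_mem hg2, toL2_of_mem ((hg1.sub hg2) : MemLp (g1 - g2) 2 mu01)]
  exact MemLp.toLp_sub hg1 hg2

lemma toL2_smul (c : ℝ) {g : ℝ → ℝ} (hg : MemLp g 2 mu01) :
    toL2 (fun t => c * g t) = c • toL2 g := by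
  show toL2 (c • g) = c • toL2 g
  rw [toL2_of_mem hg, toL2_of_mem ((hg.const_smul c) : MemLp (c • g) 2 mu01)]
  exact MemLp.toLp_const_smul c hg

lemma norm_toL2_le {g : ℝ → ℝ} (hg : MemLp g 2 mu01) {C : ℝ} (hC : 0 ≤ C)
    (hb : ∀ t ∈ Ioc (0:ℝ) 1, |g t| ≤ C) : ‖toL2 g‖ ≤ C := by
  rw [toL2_of_mem hg, Lp.norm_toLp g hg]
  have hae : ∀ᵐ t ∂mu01, ‖g t‖ ≤ C := by
    rw [mu01_def, ae_restrict_iff' measurableSet_Ioc]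
    exact Eventually.of_forall fun t ht => hb t ht
  have := eLpNorm_le_of_ae_bound (p := 2) hae
  rw [measure_univ, ENNReal.one_rpow, one_mul] at this
  exact ENNReal.toReal_le_of_le_ofReal hC this

lemma ae_mu01 {P : ℝ → Prop} (h : ∀ t ∈ Ioc (0:ℝ) 1, P t) : ∀ᵐ t ∂mu01, P t := by
  rw [mu01_def, ae_restrict_iff' measurableSet_Ioc]
  exact Eventually.of_forall h

lemma comp_contOn {g : ℝ → ℝ → ℝ}
    (hg : ContinuousOn (fun p : ℝ × ℝ => g p.1 p.2) (Icc 0 1 ×ˢ univ))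
    {w : ℝ → ℝ} (hw : ContinuousOn w (Icc (0:ℝ) 1)) :
    ContinuousOn (fun t => g t (w t)) (Icc (0:ℝ) 1) :=
  hg.comp (continuousOn_id.prodMk hw) (fun t ht => ⟨ht, mem_univ _⟩)

lemma unif_est {g : ℝ → ℝ → ℝ}
    (hg : ContinuousOn (fun p : ℝ × ℝ => g p.1 p.2) (Icc 0 1 ×ˢ univ))
    (M : ℝ) {ε : ℝ} (hε : 0 < ε) :
    ∃ δ > 0, ∀ t ∈ Icc (0:ℝ) 1, ∀ z1 z2 : ℝ, |z1| ≤ M → |z2| ≤ M →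
      |z1 - z2| < δ → |g t z1 - g t z2| < ε := by
  have hK : IsCompact (Icc (0:ℝ) 1 ×ˢ Icc (-M) M) := isCompact_Icc.prod isCompact_Icc
  have hgK : ContinuousOn (fun p : ℝ × ℝ => g p.1 p.2) (Icc (0:ℝ) 1 ×ˢ Icc (-M) M) :=
    hg.mono (prod_mono_right (subset_univ _))
  have huc := hK.uniformContinuousOn_of_continuous hgK
  rw [Metric.uniformContinuousOn_iff] at huc
  obtain ⟨δ, hδ, hprop⟩ := huc ε hε
  refine ⟨δ, hδ, fun t ht z1 z2 hz1 hz2 hlt => ?_⟩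
  have h1 : (t, z1) ∈ Icc (0:ℝ) 1 ×ˢ Icc (-M) M := ⟨ht, abs_le.1 hz1⟩
  have h2 : (t, z2) ∈ Icc (0:ℝ) 1 ×ˢ Icc (-M) M := ⟨ht, abs_le.1 hz2⟩
  have hd : dist ((t, z1) : ℝ × ℝ) (t, z2) < δ := by
    rw [Prod.dist_eq, dist_self, Real.dist_eq]
    exact max_lt hδ hlt
  have := hprop _ h1 _ h2 hd
  rwa [Real.dist_eq] at this

lemma mem_c_PP {c : ℝ → ℝ} (hc : ContinuousOn c (Icc (0:ℝ) 1)) (h : Lp ℝ 2 mu01) :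
    MemLp (fun t => c t * PP h t) 2 mu01 :=
  memL2_of_contOn (hc.mul (PP_contOn h))

lemma norm_c_PP_le {c : ℝ → ℝ} (hc : ContinuousOn c (Icc (0:ℝ) 1)) {C : ℝ} (hC : 0 ≤ C)
    (hb : ∀ t ∈ Icc (0:ℝ) 1, |c t| ≤ C) (h : Lp ℝ 2 mu01) :
    ‖toL2 (fun t => c t * PP h t)‖ ≤ 2 * C * ‖h‖ := by
  refine norm_toL2_le (mem_c_PP hc h) (by positivity) ?_
  intro t ht
  have ht' : t ∈ Icc (0:ℝ) 1 := Ioc_subset_Icc_self ht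
  rw [abs_mul]
  calc |c t| * |PP h t| ≤ C * (2 * ‖h‖) :=
        mul_le_mul (hb t ht') (PP_bound h ht') (abs_nonneg _) hC
  _ = 2 * C * ‖h‖ := by ring

open scoped Classical in
noncomputable def Lop (c : ℝ → ℝ) : Lp ℝ 2 mu01 →L[ℝ] Lp ℝ 2 mu01 :=
  if hc : ContinuousOn c (Icc (0:ℝ) 1) then
    LinearMap.mkContinuousOfExistsBound
      { toFun := fun h => toL2 (fun t => c t * PP h t)
        map_add' := by
          intro h1 h2
          rw [← toL2_add (mem_c_PP hc h1) (mem_c_PP hc h2)]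
          refine toL2_congr (mem_c_PP hc (h1 + h2)) (ae_mu01 fun t ht => ?_)
          simp only []
          rw [PP_add h1 h2 (Ioc_subset_Icc_self ht)]
          ring
        map_smul' := by
          intro a h
          simp only [RingHom.id_apply]
          rw [← toL2_smul a (mem_c_PP hc h)]
          refine toL2_congr (mem_c_PP hc (a • h)) (ae_mu01 fun t ht => ?_)
          simp only []
          rw [PP_smul a h (Ioc_subset_Icc_self ht)]
          ring }
      (by
        obtain ⟨C, hC⟩ := (isCompact_Icc :
          IsCompact (Icc (0:ℝ) 1)).exists_bound_of_continuousOn hc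
        have hC0 : 0 ≤ C := le_trans (abs_nonneg _) (hC 0 (by norm_num))
        exact ⟨2 * C, fun h => norm_c_PP_le hc hC0 hC h⟩)
  else 0

lemma Lop_apply {c : ℝ → ℝ} (hc : ContinuousOn c (Icc (0:ℝ) 1)) (h : Lp ℝ 2 mu01) :
    Lop c h = toL2 (fun t => c t * PP h t) := by
  rw [Lop, dif_pos hc]; rfl

lemma Lop_sub_apply {c1 c2 : ℝ → ℝ} (hc1 : ContinuousOn c1 (Icc (0:ℝ) 1))
    (hc2 : ContinuousOn c2 (Icc (0:ℝ) 1)) (h : Lp ℝ 2 mu01) :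
    (Lop c1 - Lop c2) h = toL2 (fun t => (c1 t - c2 t) * PP h t) := by
  rw [ContinuousLinearMap.sub_apply, Lop_apply hc1, Lop_apply hc2,
    ← toL2_sub (mem_c_PP hc1 h) (mem_c_PP hc2 h)]
  congr 1
  funext t
  ring

lemma slice_cont {g : ℝ → ℝ → ℝ}
    (hg : ContinuousOn (fun p : ℝ × ℝ => g p.1 p.2) (Icc 0 1 ×ˢ univ))
    {t : ℝ} (ht : t ∈ Icc (0:ℝ) 1) : Continuous (fun z => g t z) := by
  rw [← continuousOn_univ]
  exact hg.comp ((continuous_const.prodMk continuous_id).continuousOn)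
    (fun z _ => ⟨ht, mem_univ _⟩)

lemma ftc_remainder {f fx : ℝ → ℝ → ℝ} {t : ℝ}
    (hd : ∀ z : ℝ, HasDerivAt (fun w => f t w) (fx t z) z)
    (hcont : Continuous (fun z => fx t z)) (a b : ℝ) :
    f t (a + b) - f t a - fx t a * b = ∫ z in a..(a+b), (fx t z - fx t a) := by
  rw [intervalIntegral.integral_sub (hcont.intervalIntegrable _ _) intervalIntegrable_const,
    intervalIntegral.integral_eq_sub_of_hasDerivAt (fun z _ => hd z)
      (hcont.intervalIntegrable _ _),
    intervalIntegral.integral_const]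
  simp only [smul_eq_mul]
  ring

lemma key_est {f fx : ℝ → ℝ → ℝ}
    (hfx_deriv : ∀ t ∈ Icc (0:ℝ) 1, ∀ z : ℝ, HasDerivAt (fun w => f t w) (fx t z) z)
    (hfx_cont : ContinuousOn (fun p : ℝ × ℝ => fx p.1 p.2) (Icc 0 1 ×ˢ univ))
    (u : Lp ℝ 2 mu01) {ε : ℝ} (hε : 0 < ε) :
    ∃ δ > 0, ∀ h : Lp ℝ 2 mu01, ‖h‖ < δ → ∀ t ∈ Icc (0:ℝ) 1,
      |f t (PP u t + PP h t) - f t (PP u t) - fx t (PP u t) * PP h t| ≤ ε * (2 * ‖h‖) := by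
  obtain ⟨δ₀, hδ₀, hprop⟩ := unif_est hfx_cont (2 * ‖u‖ + 1) hε
  refine ⟨min (δ₀ / 2) (1 / 4), by positivity, fun h hh t ht => ?_⟩
  have hb2 : |PP h t| ≤ 2 * ‖h‖ := PP_bound h ht
  have hh1 : 2 * ‖h‖ < δ₀ := by
    have := lt_min_iff.1 hh; linarith [this.1]
  have hh2 : 2 * ‖h‖ < 1 / 2 := by
    have := lt_min_iff.1 hh; linarith [this.2]
  have ha : |PP u t| ≤ 2 * ‖u‖ := PP_bound u ht
  have hcont : Continuous (fun z => fx t z) := slice_cont hfx_cont ht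
  set a := PP u t with ha_def
  set b := PP h t with hb_def
  rw [ftc_remainder (hfx_deriv t ht) hcont a b]
  have hbnd : ∀ x ∈ Set.uIoc a (a + b), ‖fx t x - fx t a‖ ≤ ε := by
    intro x hx
    have hx' : |x - a| ≤ |b| := by
      rcases hx.1, hx.2 with ⟨h1, h2⟩
      rw [abs_le]
      constructor
      · have : min a (a + b) ≥ a - |b| := by
          apply le_min <;> [linarith [abs_nonneg b]; linarith [neg_abs_le b]]
        linarith [h1, this]
      · have : max a (a + b) ≤ a + |b| := by
          apply max_le <;> [linarith [abs_nonneg b]; linarith [le_abs_self b]]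
        linarith [h2, this]
    have hxM : |x| ≤ 2 * ‖u‖ + 1 := by
      have : |x| ≤ |a| + |x - a| := by
        have := abs_add_le a (x - a); simpa using this
      linarith [hx'.trans hb2]
    have haM : |a| ≤ 2 * ‖u‖ + 1 := by linarith
    have := hprop t ht x a hxM haM (lt_of_le_of_lt hx' (hb2.trans_lt hh1))
    rw [Real.norm_eq_abs]
    exact this.le
  have hnorm := intervalIntegral.norm_integral_le_of_norm_le_const hbnd
  rw [Real.norm_eq_abs] at hnorm
  have : |a + b - a| = |b| := by ring_nf
  calc |∫ z in a..(a + b), (fx t z - fx t a)| ≤ ε * |a + b - a| := hnorm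
  _ = ε * |b| := by rw [this]
  _ ≤ ε * (2 * ‖h‖) := mul_le_mul_of_nonneg_left hb2 hε.le

lemma memsub {g1 g2 : ℝ → ℝ} (h1 : MemLp g1 2 mu01) (h2 : MemLp g2 2 mu01) :
    MemLp (fun t => g1 t - g2 t) 2 mu01 := h1.sub h2

noncomputable def Nmap (f : ℝ → ℝ → ℝ) (u : Lp ℝ 2 mu01) : Lp ℝ 2 mu01 :=
  toL2 (fun t => f t (PP u t))

section main

variable {f fx : ℝ → ℝ → ℝ}

lemma cf_contOn (hf_cont : ContinuousOn (fun p : ℝ × ℝ => f p.1 p.2) (Icc 0 1 ×ˢ univ))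
    (u : Lp ℝ 2 mu01) : ContinuousOn (fun t => f t (PP u t)) (Icc (0:ℝ) 1) :=
  comp_contOn hf_cont (PP_contOn u)

lemma hasFDerivAt_Nmap
    (hf_cont : ContinuousOn (fun p : ℝ × ℝ => f p.1 p.2) (Icc 0 1 ×ˢ univ))
    (hfx_deriv : ∀ t ∈ Icc (0:ℝ) 1, ∀ z : ℝ, HasDerivAt (fun w => f t w) (fx t z) z)
    (hfx_cont : ContinuousOn (fun p : ℝ × ℝ => fx p.1 p.2) (Icc 0 1 ×ˢ univ))
    (u : Lp ℝ 2 mu01) :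
    HasFDerivAt (Nmap f) (Lop (fun t => fx t (PP u t))) u := by
  have hcu : ContinuousOn (fun t => fx t (PP u t)) (Icc (0:ℝ) 1) :=
    comp_contOn hfx_cont (PP_contOn u)
  rw [hasFDerivAt_iff_isLittleO_nhds_zero, Asymptotics.isLittleO_iff]
  intro c hc
  obtain ⟨δ, hδ, hkey⟩ := key_est hfx_deriv hfx_cont u (half_pos hc)
  rw [Metric.eventually_nhds_iff]
  refine ⟨δ, hδ, fun h hh => ?_⟩
  rw [dist_zero_right] at hh
  have m1 : MemLp (fun t => f t (PP (u + h) t)) 2 mu01 :=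
    memL2_of_contOn (cf_contOn hf_cont (u + h))
  have m2 : MemLp (fun t => f t (PP u t)) 2 mu01 := memL2_of_contOn (cf_contOn hf_cont u)
  have m3 : MemLp (fun t => fx t (PP u t) * PP h t) 2 mu01 := mem_c_PP hcu h
  have e1 : Nmap f (u + h) - Nmap f u - Lop (fun t => fx t (PP u t)) h
      = toL2 (fun t => f t (PP (u + h) t) - f t (PP u t) - fx t (PP u t) * PP h t) := by
    rw [Lop_apply hcu, Nmap, Nmap, ← toL2_sub m1 m2, ← toL2_sub (memsub m1 m2) m3]
  rw [e1]
  refine norm_toL2_le (memsub (memsub m1 m2) m3) (by positivity) ?_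
  intro t ht
  have ht' : t ∈ Icc (0:ℝ) 1 := Ioc_subset_Icc_self ht
  have hk := hkey h hh t ht'
  rw [PP_add u h ht']
  linarith [hk]

lemma cont_Lmap
    (hfx_cont : ContinuousOn (fun p : ℝ × ℝ => fx p.1 p.2) (Icc 0 1 ×ˢ univ)) :
    Continuous (fun u : Lp ℝ 2 mu01 => Lop (fun t => fx t (PP u t))) := by
  rw [continuous_iff_continuousAt]
  intro u₀
  rw [Metric.continuousAt_iff]
  intro ε hε
  obtain ⟨δ₀, hδ₀, hprop⟩ := unif_est hfx_cont (2 * ‖u₀‖ + 1) (by positivity : (0:ℝ) < ε / 5)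
  refine ⟨min (δ₀ / 2) (1 / 2), by positivity, fun {u} hu => ?_⟩
  rw [dist_eq_norm] at hu ⊢
  have hu1 : ‖u - u₀‖ < δ₀ / 2 := lt_of_lt_of_le hu (min_le_left _ _)
  have hu2 : ‖u - u₀‖ < 1 / 2 := lt_of_lt_of_le hu (min_le_right _ _)
  have hcu : ContinuousOn (fun t => fx t (PP u t)) (Icc (0:ℝ) 1) :=
    comp_contOn hfx_cont (PP_contOn u)
  have hcu₀ : ContinuousOn (fun t => fx t (PP u₀ t)) (Icc (0:ℝ) 1) :=
    comp_contOn hfx_cont (PP_contOn u₀)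
  have hbnd : ∀ t ∈ Icc (0:ℝ) 1, |fx t (PP u t) - fx t (PP u₀ t)| ≤ ε / 5 := by
    intro t ht
    have h1 : |PP u t| ≤ 2 * ‖u₀‖ + 1 := by
      have hn : ‖u‖ ≤ ‖u₀‖ + ‖u - u₀‖ := by
        calc ‖u‖ = ‖u₀ + (u - u₀)‖ := by rw [add_sub_cancel]
        _ ≤ ‖u₀‖ + ‖u - u₀‖ := norm_add_le _ _
      linarith [PP_bound u ht]
    have h2 : |PP u₀ t| ≤ 2 * ‖u₀‖ + 1 := by linarith [PP_bound u₀ ht]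
    have h3 : |PP u t - PP u₀ t| < δ₀ := by
      rw [← PP_sub u u₀ ht]
      linarith [PP_bound (u - u₀) ht]
    exact (hprop t ht _ _ h1 h2 h3).le
  have key : ‖Lop (fun t => fx t (PP u t)) - Lop (fun t => fx t (PP u₀ t))‖ ≤ 2 * (ε / 5) := by
    refine ContinuousLinearMap.opNorm_le_bound _ (by positivity) fun h => ?_
    rw [Lop_sub_apply hcu hcu₀]
    exact norm_c_PP_le (hcu.sub hcu₀) (by positivity) hbnd h
  calc ‖Lop (fun t => fx t (PP u t)) - Lop (fun t => fx t (PP u₀ t))‖ ≤ 2 * (ε / 5) := key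
  _ < ε := by linarith

end main

section main2

variable {f fx : ℝ → ℝ → ℝ} {y : ℝ → ℝ}

lemma coeFn_S (hf_cont : ContinuousOn (fun p : ℝ × ℝ => f p.1 p.2) (Icc 0 1 ×ˢ univ))
    (hy : MemLp y 2 mu01) (u : Lp ℝ 2 mu01) :
    (↑↑(u - Nmap f u - toL2 y) : ℝ → ℝ)
      =ᵐ[mu01] fun t => (↑↑u : ℝ → ℝ) t - f t (PP u t) - y t := by
  filter_upwards [Lp.coeFn_sub (u - Nmap f u) (toL2 y), Lp.coeFn_sub u (Nmap f u),
    toL2_coe (memL2_of_contOn (cf_contOn hf_cont u)), toL2_coe hy] with t h1 h2 h3 h4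
  simp only [Pi.sub_apply] at h1 h2
  rw [h1, h2, h4, show Nmap f u = toL2 (fun t => f t (PP u t)) from rfl, h3]

lemma real_inner_mul (a b : ℝ) : (inner ℝ a b : ℝ) = a * b := by
  simp [RCLike.inner_apply, starRingEnd_apply, mul_comm]

lemma phi_eq_normsq (hf_cont : ContinuousOn (fun p : ℝ × ℝ => f p.1 p.2) (Icc 0 1 ×ˢ univ))
    (hy : MemLp y 2 mu01) (u : Lp ℝ 2 mu01) :
    phi f y u = (1/2 : ℝ) * ‖u - Nmap f u - toL2 y‖^2 := by
  rw [← real_inner_self_eq_norm_sq]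
  rw [L2.inner_def]
  rw [phi, intervalIntegral.integral_of_le zero_le_one]
  congr 1
  have : (∫ t in Ioc (0:ℝ) 1, ((↑↑u : ℝ → ℝ) t - f t (PP u t) - y t)^2)
      = ∫ t, ((↑↑u : ℝ → ℝ) t - f t (PP u t) - y t)^2 ∂mu01 := rfl
  rw [this]
  apply integral_congr_ae
  filter_upwards [coeFn_S hf_cont hy u] with t ht
  rw [real_inner_mul, ht]
  ring

end main2

/-- Under C(c), for fixed `y ∈ L²(0,1)` the functional
`φ(x) = ½ ∫₀¹ |ẍ(t) − f(t,x(t)) − y(t)|² dt` on `𝕏` is `C¹`, with derivative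
`φ′(x)h = ∫₀¹ (ẍ(t) − f(t,x(t)) − y(t)) (ḧ(t) − f_x(t,x(t)) h(t)) dt` for `h ∈ 𝕏`
(the direction `h ∈ 𝕏` corresponds to `ḧ ∈ L²`, with `h = PP ḧ`). -/
theorem phi_is_C1_with_derivative
    (f fx : ℝ → ℝ → ℝ) (y : ℝ → ℝ) (hy : MemLp y 2 mu01)
    (hf_cont : ContinuousOn (fun p : ℝ × ℝ => f p.1 p.2) (Set.Icc 0 1 ×ˢ Set.univ))
    (hfx_deriv : ∀ t ∈ Set.Icc (0:ℝ) 1, ∀ z : ℝ, HasDerivAt (fun w => f t w) (fx t z) z)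
    (hfx_cont : ContinuousOn (fun p : ℝ × ℝ => fx p.1 p.2) (Set.Icc 0 1 ×ˢ Set.univ)) :
    ContDiff ℝ 1 (phi f y) ∧
    ∀ u h : Lp ℝ 2 mu01,
      fderiv ℝ (phi f y) u h
        = ∫ t in (0:ℝ)..1,
            (u t - f t (PP u t) - y t) * (h t - fx t (PP u t) * PP h t) := by
  have hN : ∀ u, HasFDerivAt (Nmap f) (Lop (fun t => fx t (PP u t))) u :=
    hasFDerivAt_Nmap hf_cont hfx_deriv hfx_cont
  have hS : ∀ u : Lp ℝ 2 mu01, HasFDerivAt (fun v => v - Nmap f v - toL2 y)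
      (ContinuousLinearMap.id ℝ _ - Lop (fun t => fx t (PP u t))) u :=
    fun u => ((hasFDerivAt_id u).sub (hN u)).sub_const _
  have hphiD : ∀ u, HasFDerivAt (phi f y)
      ((innerSL ℝ (u - Nmap f u - toL2 y)).comp
        (ContinuousLinearMap.id ℝ _ - Lop (fun t => fx t (PP u t)))) u := by
    intro u
    have hq := (hS u).norm_sq
    have h3 := hq.const_mul (1/2 : ℝ)
    have hfun : phi f y = fun v => (1/2 : ℝ) * ‖v - Nmap f v - toL2 y‖^2 :=
      funext fun v => phi_eq_normsq hf_cont hy v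
    rw [hfun]
    refine h3.congr_fderiv ?_
    ext h
    simp only [ContinuousLinearMap.coe_smul', Pi.smul_apply, two_smul,
      ContinuousLinearMap.add_apply, ContinuousLinearMap.coe_comp',
      Function.comp_apply, smul_eq_mul, innerSL_apply_apply]
    ring
  have hfderiv : ∀ u, fderiv ℝ (phi f y) u = (innerSL ℝ (u - Nmap f u - toL2 y)).comp
      (ContinuousLinearMap.id ℝ _ - Lop (fun t => fx t (PP u t))) :=
    fun u => (hphiD u).fderiv
  constructor
  · rw [contDiff_one_iff_fderiv]
    refine ⟨fun u => (hphiD u).differentiableAt, ?_⟩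
    rw [funext hfderiv]
    have hNcont : Continuous (Nmap f) :=
      continuous_iff_continuousAt.2 fun u => (hN u).continuousAt
    have hScont : Continuous (fun v : Lp ℝ 2 mu01 => v - Nmap f v - toL2 y) :=
      (continuous_id.sub hNcont).sub continuous_const
    exact Continuous.clm_comp ((innerSL ℝ).continuous.comp hScont)
      (continuous_const.sub (cont_Lmap hfx_cont))
  · intro u h
    rw [hfderiv u]
    have hcu : ContinuousOn (fun t => fx t (PP u t)) (Icc (0:ℝ) 1) :=
      comp_contOn hfx_cont (PP_contOn u)
    have e : ((innerSL ℝ (u - Nmap f u - toL2 y)).comp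
        (ContinuousLinearMap.id ℝ _ - Lop (fun t => fx t (PP u t)))) h
        = (inner ℝ (u - Nmap f u - toL2 y)
            (h - Lop (fun t => fx t (PP u t)) h) : ℝ) := by
      simp only [ContinuousLinearMap.coe_comp', Function.comp_apply,
        ContinuousLinearMap.sub_apply, ContinuousLinearMap.coe_id', id_eq, innerSL_apply_apply]
    rw [e, L2.inner_def]
    have hae : (fun a => (inner ℝ ((↑↑(u - Nmap f u - toL2 y) : ℝ → ℝ) a)
          ((↑↑(h - Lop (fun t => fx t (PP u t)) h) : ℝ → ℝ) a) : ℝ))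
        =ᵐ[mu01] fun t => ((↑↑u : ℝ → ℝ) t - f t (PP u t) - y t)
          * ((↑↑h : ℝ → ℝ) t - fx t (PP u t) * PP h t) := by
      have hLop : Lop (fun t => fx t (PP u t)) h = toL2 (fun t => fx t (PP u t) * PP h t) :=
        Lop_apply hcu h
      filter_upwards [coeFn_S hf_cont hy u,
        Lp.coeFn_sub h (Lop (fun t => fx t (PP u t)) h),
        toL2_coe (mem_c_PP hcu h)] with t h1 h2 h3
      rw [real_inner_mul, h1, h2]
      simp only [Pi.sub_apply]
      rw [hLop, h3]
    rw [integral_congr_ae hae, intervalIntegral.integral_of_le zero_le_one]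
    rfl
end

section
/- Assume f : [0,1] × ℝ → ℝ satisfies C(c): f is continuous on [0,1] × ℝ with continuous partial derivative f_x with respect to the second variable, and C(f_x): inf over [0,1] × ℝ of f_x is > −π². Then for every fixed x ∈ 𝕏 and y ∈ L²(0,1), the linear Dirichlet problem ξ̈(t) = f_x(t, x(t)) ξ(t) + y(t) for a.e. t ∈ [0,1], ξ(0) = ξ(1) = 0, has exactly one solution ξ ∈ 𝕏. -/
open MeasureTheory Set Filter

/-- The `L²(0,1)` norm of a real function, `‖g‖_{L²} = (∫₀¹ g(t)² dt)^{1/2}`. -/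
noncomputable def L2norm01 (g : ℝ → ℝ) : ℝ := Real.sqrt (∫ t in (0:ℝ)..1, (g t)^2)

/-- An element of `H²(0,1)`: an absolutely continuous function `x` on `[0,1]`
(represented as the integral of its weak derivative `dx`), whose derivative `dx` is
itself absolutely continuous with weak derivative `ddx ∈ L²(0,1)`. -/
structure H2fun where
  x : ℝ → ℝ
  dx : ℝ → ℝ
  ddx : ℝ → ℝ
  dx_int : IntervalIntegrable dx MeasureTheory.volume 0 1
  ddx_memLp : MemLp ddx 2 (MeasureTheory.volume.restrict (Set.Ioc (0:ℝ) 1))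
  x_rep : ∀ t ∈ Set.Icc (0:ℝ) 1, x t = x 0 + ∫ s in (0:ℝ)..t, dx s
  dx_rep : ∀ t ∈ Set.Icc (0:ℝ) 1, dx t = dx 0 + ∫ s in (0:ℝ)..t, ddx s

/-- An element of `𝕏 = H²(0,1) ∩ H¹₀(0,1)`: an `H²` function with
Dirichlet boundary conditions `x(0) = x(1) = 0`. -/
structure Xfun extends H2fun where
  bc0 : x 0 = 0
  bc1 : x 1 = 0

open intervalIntegral

lemma abs_intervalIntegral_mono {f g : ℝ → ℝ} {a b : ℝ}
    (hf : IntervalIntegrable f volume a b) (hg : IntervalIntegrable g volume a b)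
    (h0 : ∀ s ∈ Set.uIcc a b, 0 ≤ f s) (hle : ∀ s ∈ Set.uIcc a b, f s ≤ g s) :
    |∫ s in a..b, f s| ≤ |∫ s in a..b, g s| := by
  rcases le_total a b with hab | hab
  · rw [Set.uIcc_of_le hab] at h0 hle
    rw [abs_of_nonneg (intervalIntegral.integral_nonneg hab h0),
      abs_of_nonneg (intervalIntegral.integral_nonneg hab
        (fun s hs => le_trans (h0 s hs) (hle s hs)))]
    exact intervalIntegral.integral_mono_on hab hf hg hle
  · rw [Set.uIcc_of_ge hab] at h0 hle
    rw [intervalIntegral.integral_symm, abs_neg, intervalIntegral.integral_symm b a, abs_neg,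
      abs_of_nonneg (intervalIntegral.integral_nonneg hab h0),
      abs_of_nonneg (intervalIntegral.integral_nonneg hab
        (fun s hs => le_trans (h0 s hs) (hle s hs)))]
    exact intervalIntegral.integral_mono_on hab hf.symm hg.symm hle

lemma hasDerivAt_volterra {h : ℝ → ℝ} (hint : ∀ a b : ℝ, IntervalIntegrable h volume a b)
    (t : ℝ) :
    HasDerivAt (fun u => ∫ s in (0:ℝ)..u, (u - s) * h s) (∫ s in (0:ℝ)..t, h s) t := by
  have hint' : ∀ (c a b : ℝ), IntervalIntegrable (fun s => (c - s) * h s) volume a b := by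
    intro c a b
    exact (hint a b).continuousOn_mul (by fun_prop)
  rw [hasDerivAt_iff_isLittleO]
  have key : ∀ u : ℝ, (∫ s in (0:ℝ)..u, (u - s) * h s) - (∫ s in (0:ℝ)..t, (t - s) * h s)
      - (u - t) * ∫ s in (0:ℝ)..t, h s = ∫ s in t..u, (u - s) * h s := by
    intro u
    have hsplit : (∫ s in (0:ℝ)..u, (u - s) * h s)
        = (∫ s in (0:ℝ)..t, (u - s) * h s) + ∫ s in t..u, (u - s) * h s :=
      (intervalIntegral.integral_add_adjacent_intervals (hint' u 0 t) (hint' u t u)).symm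
    have hdiff : (∫ s in (0:ℝ)..t, (u - s) * h s) - (∫ s in (0:ℝ)..t, (t - s) * h s)
        = (u - t) * ∫ s in (0:ℝ)..t, h s := by
      rw [← intervalIntegral.integral_sub (hint' u 0 t) (hint' t 0 t),
        ← intervalIntegral.integral_const_mul]
      apply intervalIntegral.integral_congr
      intro s _
      ring
    rw [hsplit]
    linarith [hdiff]
  have habs : Continuous fun u => (abs (∫ s in t..u, |h s|)) := by
    have : Continuous fun u => ∫ s in t..u, |h s| :=
      intervalIntegral.continuous_primitive (fun a b => (hint a b).abs) t
    exact this.abs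
  rw [Asymptotics.isLittleO_iff]
  intro c hc
  have h0 : Tendsto (fun u => (abs (∫ s in t..u, |h s|))) (nhds t) (nhds 0) := by
    have := habs.tendsto t
    simpa using this
  filter_upwards [h0.eventually_le_const (by linarith : (0:ℝ) < c)] with u hu
  rw [smul_eq_mul, key u]
  have h1 : ‖∫ s in t..u, (u - s) * h s‖ ≤ (abs (∫ s in t..u, |u - s| * |h s|)) := by
    simpa [Real.norm_eq_abs, abs_mul] using
      intervalIntegral.norm_integral_le_abs_integral_norm (f := fun s => (u - s) * h s)
      (a := t) (b := u) (μ := volume)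
  have h2 : (abs (∫ s in t..u, |u - s| * |h s|)) ≤ (abs (∫ s in t..u, |u - t| * |h s|)) := by
    apply abs_intervalIntegral_mono
      (((hint t u).abs).continuousOn_mul (by fun_prop))
      (((hint t u).abs).continuousOn_mul (by fun_prop))
    · intro s _; positivity
    · intro s hs
      have habs2 : |u - s| ≤ |u - t| := by
        rcases Set.mem_uIcc.1 hs with ⟨hts, hsu⟩ | ⟨hus, hst⟩
        · rw [abs_of_nonneg (by linarith), abs_of_nonneg (by linarith)]; linarith
        · rw [abs_of_nonpos (by linarith), abs_of_nonpos (by linarith)]; linarith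
      exact mul_le_mul_of_nonneg_right habs2 (abs_nonneg _)
  have h3 : (abs (∫ s in t..u, |u - t| * |h s|)) = |u - t| * (abs (∫ s in t..u, |h s|)) := by
    rw [intervalIntegral.integral_const_mul, abs_mul, abs_abs]
  calc ‖∫ s in t..u, (u - s) * h s‖ ≤ |u - t| * (abs (∫ s in t..u, |h s|)) := by
        rw [← h3]; exact le_trans h1 h2
    _ ≤ |u - t| * c := mul_le_mul_of_nonneg_left hu (abs_nonneg _)
    _ = c * ‖u - t‖ := by rw [Real.norm_eq_abs]; ring

lemma volterra_eq_double {h : ℝ → ℝ} (hint : ∀ a b : ℝ, IntervalIntegrable h volume a b)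
    (t : ℝ) :
    ∫ σ in (0:ℝ)..t, (∫ s in (0:ℝ)..σ, h s) = ∫ s in (0:ℝ)..t, (t - s) * h s := by
  have hH : Continuous fun σ => ∫ s in (0:ℝ)..σ, h s :=
    intervalIntegral.continuous_primitive hint 0
  set F : ℝ → ℝ := fun u => (∫ σ in (0:ℝ)..u, (∫ s in (0:ℝ)..σ, h s))
      - ∫ s in (0:ℝ)..u, (u - s) * h s with hF
  have hder : ∀ u : ℝ, HasDerivAt F 0 u := by
    intro u
    have h1 : HasDerivAt (fun u => ∫ σ in (0:ℝ)..u, (∫ s in (0:ℝ)..σ, h s))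
        (∫ s in (0:ℝ)..u, h s) u :=
      intervalIntegral.integral_hasDerivAt_right (hH.intervalIntegrable _ _)
        (hH.stronglyMeasurableAtFilter _ _) hH.continuousAt
    have h2 := h1.sub (hasDerivAt_volterra hint u)
    rw [sub_self] at h2
    exact h2
  have hconst : F t = F 0 :=
    is_const_of_deriv_eq_zero (fun u => (hder u).differentiableAt)
      (fun u => (hder u).deriv) t 0
  have hF0 : F 0 = 0 := by simp [hF]
  have := hconst.trans hF0
  simp only [hF] at this
  linarith [this]

noncomputable def VolExt (z : C(Set.Icc (0:ℝ) 1, ℝ)) : ℝ → ℝ :=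
  fun t => z (Set.projIcc 0 1 zero_le_one t)

lemma VolExt_continuous (z : C(Set.Icc (0:ℝ) 1, ℝ)) : Continuous (VolExt z) :=
  z.continuous.comp continuous_projIcc

lemma VolExt_eq (z : C(Set.Icc (0:ℝ) 1, ℝ)) {t : ℝ} (ht : t ∈ Set.Icc (0:ℝ) 1) :
    VolExt z t = z ⟨t, ht⟩ := by
  simp [VolExt, Set.projIcc_of_mem zero_le_one ht]

noncomputable def VolRaw (q ψ : ℝ → ℝ) (c : ℝ) (z : C(Set.Icc (0:ℝ) 1, ℝ)) : ℝ → ℝ :=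
  fun t => c * t + ∫ s in (0:ℝ)..t, (t - s) * (q s * VolExt z s + ψ s)

section VolSetup

variable {q ψ : ℝ → ℝ} (hq : Continuous q) (hψ : Integrable ψ volume)

include hq hψ in
lemma VolG_int (z : C(Set.Icc (0:ℝ) 1, ℝ)) (a b : ℝ) :
    IntervalIntegrable (fun s => q s * VolExt z s + ψ s) volume a b :=
  ((hq.mul (VolExt_continuous z)).intervalIntegrable a b).add (hψ.intervalIntegrable (a := a) (b := b))

include hq hψ in
lemma VolG_int' (z : C(Set.Icc (0:ℝ) 1, ℝ)) (u a b : ℝ) :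
    IntervalIntegrable (fun s => (u - s) * (q s * VolExt z s + ψ s)) volume a b :=
  (VolG_int hq hψ z a b).continuousOn_mul (by fun_prop)

include hq hψ in
lemma VolRaw_continuous (c : ℝ) (z : C(Set.Icc (0:ℝ) 1, ℝ)) :
    Continuous (VolRaw q ψ c z) := by
  set g : ℝ → ℝ := fun s => q s * VolExt z s + ψ s with hgdef
  have hg : ∀ a b, IntervalIntegrable g volume a b := VolG_int hq hψ z
  have hsg : ∀ a b, IntervalIntegrable (fun s => s * g s) volume a b :=
    fun a b => (hg a b).continuousOn_mul (by fun_prop)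
  have hP : Continuous fun t => ∫ s in (0:ℝ)..t, g s :=
    intervalIntegral.continuous_primitive hg 0
  have hQ : Continuous fun t => ∫ s in (0:ℝ)..t, s * g s :=
    intervalIntegral.continuous_primitive hsg 0
  have hmain : Continuous fun t =>
      c * t + (t * (∫ s in (0:ℝ)..t, g s) - ∫ s in (0:ℝ)..t, s * g s) := by
    exact (continuous_const.mul continuous_id).add ((continuous_id.mul hP).sub hQ)
  apply hmain.congr
  intro t
  have : ∫ s in (0:ℝ)..t, (t - s) * g s
      = t * (∫ s in (0:ℝ)..t, g s) - ∫ s in (0:ℝ)..t, s * g s := by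
    rw [← intervalIntegral.integral_const_mul, ← intervalIntegral.integral_sub
      ((hg 0 t).const_mul t) (hsg 0 t)]
    apply intervalIntegral.integral_congr
    intro s _
    ring
  rw [VolRaw, ← this]

include hq hψ in
lemma VolRaw_dist_step (c : ℝ) {M : ℝ} (hM : ∀ t, |q t| ≤ M)
    (z w : C(Set.Icc (0:ℝ) 1, ℝ)) (n : ℕ) (D : ℝ) (hD : 0 ≤ D)
    (hb : ∀ s : Set.Icc (0:ℝ) 1, |z s - w s| ≤ D * (s:ℝ)^n / n.factorial)
    (t : Set.Icc (0:ℝ) 1) :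
    |VolRaw q ψ c z t - VolRaw q ψ c w t|
      ≤ M * D * (t:ℝ)^(n+1) / (n+1).factorial := by
  obtain ⟨t, ht0, ht1⟩ := t
  simp only
  have hM0 : 0 ≤ M := le_trans (abs_nonneg _) (hM 0)
  have hdiff : VolRaw q ψ c z t - VolRaw q ψ c w t
      = ∫ s in (0:ℝ)..t, (t - s) * (q s * (VolExt z s - VolExt w s)) := by
    rw [VolRaw, VolRaw, add_sub_add_left_eq_sub,
      ← intervalIntegral.integral_sub (VolG_int' hq hψ z t 0 t) (VolG_int' hq hψ w t 0 t)]
    apply intervalIntegral.integral_congr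
    intro s _
    ring
  rw [hdiff]
  have hint1 : IntervalIntegrable (fun s => (t - s) * (q s * (VolExt z s - VolExt w s)))
      volume 0 t := by
    apply Continuous.intervalIntegrable
    exact (continuous_const.sub continuous_id).mul
      (hq.mul ((VolExt_continuous z).sub (VolExt_continuous w)))
  calc |∫ s in (0:ℝ)..t, (t - s) * (q s * (VolExt z s - VolExt w s))|
      ≤ ∫ s in (0:ℝ)..t, |(t - s) * (q s * (VolExt z s - VolExt w s))| :=
        intervalIntegral.abs_integral_le_integral_abs ht0
    _ ≤ ∫ s in (0:ℝ)..t, (M * D / n.factorial) * s^n := by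
        apply intervalIntegral.integral_mono_on ht0 hint1.abs
        · apply Continuous.intervalIntegrable; fun_prop
        · intro s hs
          obtain ⟨hs0, hst⟩ := hs
          have hsI : s ∈ Set.Icc (0:ℝ) 1 := ⟨hs0, le_trans hst ht1⟩
          have hzw : |VolExt z s - VolExt w s| ≤ D * s^n / n.factorial := by
            rw [VolExt_eq z hsI, VolExt_eq w hsI]
            exact hb ⟨s, hsI⟩
          have h1 : |(t - s) * (q s * (VolExt z s - VolExt w s))|
              = |t - s| * (|q s| * |VolExt z s - VolExt w s|) := by
            rw [abs_mul, abs_mul]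
          rw [h1]
          have hts : |t - s| ≤ 1 := by
            rw [abs_of_nonneg (by linarith)]; linarith
          calc |t - s| * (|q s| * |VolExt z s - VolExt w s|)
              ≤ 1 * (M * (D * s^n / n.factorial)) := by
                apply mul_le_mul hts _ (by positivity) zero_le_one
                exact mul_le_mul (hM s) hzw (abs_nonneg _) hM0
            _ = (M * D / n.factorial) * s^n := by ring
    _ = (M * D / n.factorial) * (t^(n+1) / (n+1)) := by
        rw [intervalIntegral.integral_const_mul, integral_pow]
        ring
    _ ≤ M * D * t^(n+1) / (n+1).factorial := by
        rw [Nat.factorial_succ]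
        have hfac : (0:ℝ) < n.factorial := by positivity
        apply le_of_eq
        push_cast
        field_simp

end VolSetup

lemma volterra_solution (q ψ : ℝ → ℝ) (hq : Continuous q) {M : ℝ}
    (hM : ∀ t, |q t| ≤ M) (hψ : Integrable ψ volume) (c : ℝ) :
    ∃ z : ℝ → ℝ, Continuous z ∧
      (∀ t ∈ Set.Icc (0:ℝ) 1,
        z t = c * t + ∫ s in (0:ℝ)..t, (t - s) * (q s * z s + ψ s)) ∧
      (∀ z' : ℝ → ℝ, ContinuousOn z' (Set.Icc (0:ℝ) 1) →
        (∀ t ∈ Set.Icc (0:ℝ) 1,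
          z' t = c * t + ∫ s in (0:ℝ)..t, (t - s) * (q s * z' s + ψ s)) →
        ∀ t ∈ Set.Icc (0:ℝ) 1, z' t = z t) := by
  classical
  have hM0 : 0 ≤ M := le_trans (abs_nonneg _) (hM 0)
  set Φ : C(Set.Icc (0:ℝ) 1, ℝ) → C(Set.Icc (0:ℝ) 1, ℝ) := fun z =>
    ⟨fun t => VolRaw q ψ c z t, (VolRaw_continuous hq hψ c z).comp continuous_subtype_val⟩
    with hΦ
  -- iterate bound
  have hiter : ∀ (n : ℕ) (z w : C(Set.Icc (0:ℝ) 1, ℝ)) (t : Set.Icc (0:ℝ) 1),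
      |(Φ^[n] z) t - (Φ^[n] w) t| ≤ M^n * dist z w * (t:ℝ)^n / n.factorial := by
    intro n
    induction n with
    | zero =>
      intro z w t
      simpa [Real.dist_eq] using ContinuousMap.dist_apply_le_dist (f := z) (g := w) t
    | succ n ih =>
      intro z w t
      rw [Function.iterate_succ_apply', Function.iterate_succ_apply']
      have step := VolRaw_dist_step hq hψ c hM (Φ^[n] z) (Φ^[n] w) n
        (M^n * dist z w) (by positivity) (fun s => ih z w s) t
      have : |(Φ (Φ^[n] z)) t - (Φ (Φ^[n] w)) t|
          = |VolRaw q ψ c (Φ^[n] z) t - VolRaw q ψ c (Φ^[n] w) t| := rfl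
      rw [this]
      calc |VolRaw q ψ c (Φ^[n] z) t - VolRaw q ψ c (Φ^[n] w) t|
          ≤ M * (M^n * dist z w) * (t:ℝ)^(n+1) / (n+1).factorial := step
        _ = M^(n+1) * dist z w * (t:ℝ)^(n+1) / (n+1).factorial := by ring
  have hdistb : ∀ (n : ℕ) (z w : C(Set.Icc (0:ℝ) 1, ℝ)),
      dist (Φ^[n] z) (Φ^[n] w) ≤ (M^n / n.factorial) * dist z w := by
    intro n z w
    rw [ContinuousMap.dist_le (by positivity)]
    intro t
    rw [Real.dist_eq]
    calc |(Φ^[n] z) t - (Φ^[n] w) t| ≤ M^n * dist z w * (t:ℝ)^n / n.factorial :=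
          hiter n z w t
      _ ≤ M^n * dist z w * 1 / n.factorial := by
          have ht : (t:ℝ)^n ≤ 1 := pow_le_one₀ t.2.1 t.2.2
          gcongr
      _ = (M^n / n.factorial) * dist z w := by ring
  -- choose n making it a contraction
  obtain ⟨n, hn⟩ : ∃ n : ℕ, M^n / n.factorial < 1 := by
    have := FloorSemiring.tendsto_pow_div_factorial_atTop (K := ℝ) M
    have hev := this.eventually_lt_const one_pos
    exact hev.exists
  set K : NNReal := ⟨M^n / n.factorial, by positivity⟩ with hK
  have hcontr : ContractingWith K (Φ^[n]) := by
    constructor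
    · exact_mod_cast hn
    · apply LipschitzWith.of_dist_le_mul
      intro z w
      exact hdistb n z w
  haveI : Nonempty C(Set.Icc (0:ℝ) 1, ℝ) := ⟨0⟩
  set p : C(Set.Icc (0:ℝ) 1, ℝ) := ContractingWith.fixedPoint (Φ^[n]) hcontr with hp
  have hfix_n : Φ^[n] p = p := hcontr.fixedPoint_isFixedPt
  have hfix : Φ p = p := by
    have h1 : Φ^[n] (Φ p) = Φ p := by
      rw [← Function.iterate_succ_apply Φ n p, Function.iterate_succ_apply' Φ n p, hfix_n]
    have := hcontr.fixedPoint_unique h1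
    rw [this, ← hp]
  refine ⟨VolExt p, VolExt_continuous p, ?_, ?_⟩
  · intro t ht
    have h1 : VolExt p t = p ⟨t, ht⟩ := VolExt_eq p ht
    have h2 : p ⟨t, ht⟩ = Φ p ⟨t, ht⟩ := by rw [hfix]
    rw [h1, h2]
    rfl
  · intro z' hz'cont hz'eq t ht
    set z'c : C(Set.Icc (0:ℝ) 1, ℝ) := ⟨fun s => z' s, by
      apply ContinuousOn.restrict hz'cont⟩ with hz'c
    have hext : ∀ s ∈ Set.Icc (0:ℝ) 1, VolExt z'c s = z' s := by
      intro s hs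
      rw [VolExt_eq z'c hs]
      rfl
    have hfixz' : Φ z'c = z'c := by
      apply ContinuousMap.ext
      rintro ⟨s, hs⟩
      show VolRaw q ψ c z'c s = z' s
      rw [VolRaw]
      rw [hz'eq s hs]
      congr 1
      apply intervalIntegral.integral_congr
      intro u hu
      rw [Set.uIcc_of_le hs.1] at hu
      have huI : u ∈ Set.Icc (0:ℝ) 1 := ⟨hu.1, le_trans hu.2 hs.2⟩
      change (s - u) * (q u * VolExt z'c u + ψ u) = (s - u) * (q u * z' u + ψ u)
      rw [hext u huI]
    have hfixz'n : Φ^[n] z'c = z'c := Function.IsFixedPt.iterate (hfixz' : Function.IsFixedPt Φ z'c) n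
    have : z'c = p := hcontr.fixedPoint_unique hfixz'n
    have h1 : z' t = z'c ⟨t, ht⟩ := rfl
    rw [h1, this, ← VolExt_eq p ht]

lemma sturm_no_zero (q V Vd : ℝ → ℝ) (m : ℝ) (hm : -(Real.pi^2) < m)
    (hlb : ∀ t ∈ Set.Icc (0:ℝ) 1, m ≤ q t)
    (hV : ∀ t, HasDerivAt V (Vd t) t)
    (hVd : ∀ t ∈ Set.Icc (0:ℝ) 1, HasDerivAt Vd (q t * V t) t)
    (hV0 : V 0 = 0) (hVd0 : Vd 0 = 1) : V 1 ≠ 0 := by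
  intro hV1
  have hπ := Real.pi_pos
  -- choose k
  set K2 : ℝ := (max (-m) 0 + Real.pi^2)/2 with hK2def
  have hmaxlt : max (-m) 0 < Real.pi^2 := max_lt (by linarith) (by positivity)
  have hK2pos : 0 < K2 := by
    have : (0:ℝ) ≤ max (-m) 0 := le_max_right _ _
    rw [hK2def]; positivity
  have hK2lt : K2 < Real.pi^2 := by rw [hK2def]; linarith
  have hK2gt : -K2 < m := by
    have h1 : -m ≤ max (-m) 0 := le_max_left _ _
    have h2 : max (-m) 0 < K2 := by rw [hK2def]; linarith
    linarith
  set k : ℝ := Real.sqrt K2 with hkdef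
  have hk2 : k^2 = K2 := Real.sq_sqrt hK2pos.le
  have hkpos : 0 < k := Real.sqrt_pos.2 hK2pos
  have hklt : k < Real.pi := by
    rw [hkdef]
    calc Real.sqrt K2 < Real.sqrt (Real.pi^2) :=
          Real.sqrt_lt_sqrt hK2pos.le hK2lt
      _ = Real.pi := Real.sqrt_sq hπ.le
  -- continuity facts
  have hVcont : Continuous V := by
    rw [continuous_iff_continuousAt]; exact fun t => (hV t).continuousAt
  have hVdcont : ContinuousOn Vd (Set.Icc (0:ℝ) 1) :=
    fun t ht => ((hVd t ht).continuousAt).continuousWithinAt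
  -- positivity near zero
  obtain ⟨ε, hε0, hε1, hεVd⟩ : ∃ ε : ℝ, 0 < ε ∧ ε ≤ 1 ∧ ∀ t ∈ Set.Icc (0:ℝ) ε, 0 < Vd t := by
    have h01 : (0:ℝ) ∈ Set.Icc (0:ℝ) 1 := ⟨le_refl _, zero_le_one⟩
    have hc : ContinuousWithinAt Vd (Set.Icc (0:ℝ) 1) 0 := hVdcont 0 h01
    have hpre : Vd ⁻¹' Set.Ioi 0 ∈ nhdsWithin 0 (Set.Icc (0:ℝ) 1) :=
      hc (Ioi_mem_nhds (by rw [hVd0]; norm_num))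
    obtain ⟨U, hUopen, hU0, hUsub⟩ := mem_nhdsWithin.1 hpre
    obtain ⟨ε, hε, hball⟩ := Metric.isOpen_iff.1 hUopen 0 hU0
    refine ⟨min (ε/2) 1, by positivity, min_le_right _ _, ?_⟩
    intro t ht
    have htU : t ∈ U := by
      apply hball
      rw [Metric.mem_ball, Real.dist_eq, sub_zero]
      have h1 : t ≤ min (ε/2) 1 := ht.2
      have h2 : min (ε/2) 1 ≤ ε/2 := min_le_left _ _
      rw [abs_of_nonneg ht.1]; linarith
    have htI : t ∈ Set.Icc (0:ℝ) 1 := ⟨ht.1, le_trans ht.2 (min_le_right _ _)⟩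
    exact hUsub ⟨htU, htI⟩
  have hVposε : ∀ t ∈ Set.Ioc (0:ℝ) ε, 0 < V t := by
    have hmono : StrictMonoOn V (Set.Icc (0:ℝ) ε) := by
      apply strictMonoOn_of_deriv_pos (convex_Icc 0 ε) hVcont.continuousOn
      intro x hx
      rw [interior_Icc] at hx
      rw [(hV x).deriv]
      exact hεVd x ⟨hx.1.le, hx.2.le⟩
    intro t ht
    have := hmono ⟨le_refl _, hε0.le⟩ ⟨ht.1.le, ht.2⟩ ht.1
    rwa [hV0] at this
  -- first zero τ
  set S : Set ℝ := {t | t ∈ Set.Icc ε 1 ∧ V t = 0} with hSdef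
  have hSclosed : IsClosed S := by
    have : S = Set.Icc ε 1 ∩ V ⁻¹' {0} := by
      ext t; simp [hSdef, Set.mem_inter_iff, and_comm]
    rw [this]
    exact isClosed_Icc.inter (isClosed_singleton.preimage hVcont)
  have hScompact : IsCompact S := by
    apply IsCompact.of_isClosed_subset isCompact_Icc hSclosed
    intro t ht; exact ht.1
  have hSne : S.Nonempty := ⟨1, ⟨⟨hε1, le_refl _⟩, hV1⟩⟩
  set τ : ℝ := sInf S with hτdef
  have hτS : τ ∈ S := hScompact.sInf_mem hSne
  have hτε : ε ≤ τ := hτS.1.1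
  have hτ1 : τ ≤ 1 := hτS.1.2
  have hτ0 : 0 < τ := lt_of_lt_of_le hε0 hτε
  have hVτ : V τ = 0 := hτS.2
  -- V positive on (0, τ)
  have hVpos : ∀ s ∈ Set.Ioo (0:ℝ) τ, 0 < V s := by
    intro s hs
    rcases le_or_gt s ε with hsε | hsε
    · exact hVposε s ⟨hs.1, hsε⟩
    · by_contra hc
      push_neg at hc
      rcases eq_or_lt_of_le hc with heq | hlt
      · have hsS : s ∈ S := ⟨⟨hsε.le, le_trans hs.2.le hτ1⟩, heq⟩
        have := csInf_le hScompact.bddBelow hsS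
        rw [← hτdef] at this
        linarith [hs.2]
      · have hVε : 0 < V ε := hVposε ε ⟨hε0, le_refl _⟩
        have hIVT : Set.Icc (V s) (V ε) ⊆ V '' Set.Icc ε s :=
          intermediate_value_Icc' hsε.le hVcont.continuousOn
        obtain ⟨u, huI, huV⟩ := hIVT ⟨hlt.le, hVε.le⟩
        have huS : u ∈ S := ⟨⟨huI.1, le_trans huI.2 (le_trans hs.2.le hτ1)⟩, huV⟩
        have := csInf_le hScompact.bddBelow huS
        rw [← hτdef] at this
        linarith [huI.2, hs.2]
  -- Wronskian with sin(k t)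
  set w : ℝ → ℝ := fun t => Real.sin (k*t) with hwdef
  have hw : ∀ t, HasDerivAt w (k * Real.cos (k*t)) t := by
    intro t
    have h1 : HasDerivAt (fun t : ℝ => k * t) k t := by
      simpa using (hasDerivAt_id t).const_mul k
    have := (Real.hasDerivAt_sin (k*t)).comp t h1
    exact this.congr_deriv (by ring)
  have hw' : ∀ t, HasDerivAt (fun t => k * Real.cos (k*t)) (-(k^2) * Real.sin (k*t)) t := by
    intro t
    have h1 : HasDerivAt (fun t : ℝ => k * t) k t := by
      simpa using (hasDerivAt_id t).const_mul k
    have := ((Real.hasDerivAt_cos (k*t)).comp t h1).const_mul k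
    exact this.congr_deriv (by ring)
  set W : ℝ → ℝ := fun t => Vd t * w t - V t * (k * Real.cos (k*t)) with hWdef
  have hW : ∀ t ∈ Set.Icc (0:ℝ) 1, HasDerivAt W ((q t + k^2) * V t * w t) t := by
    intro t ht
    have := ((hVd t ht).mul (hw t)).sub ((hV t).mul (hw' t))
    exact this.congr_deriv (by simp only [hwdef]; ring)
  have hW0 : W 0 = 0 := by
    simp [hWdef, hwdef, hV0]
  have hWmono : StrictMonoOn W (Set.Icc 0 τ) := by
    apply strictMonoOn_of_deriv_pos (convex_Icc 0 τ)
    · apply ContinuousOn.sub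
      · exact ((hVdcont.mono (Set.Icc_subset_Icc_right hτ1)).mul
          (Real.continuous_sin.comp (continuous_const.mul continuous_id)).continuousOn)
      · exact hVcont.continuousOn.mul
          ((continuous_const.mul (Real.continuous_cos.comp
            (continuous_const.mul continuous_id))).continuousOn)
    · intro x hx
      rw [interior_Icc] at hx
      have hxI : x ∈ Set.Icc (0:ℝ) 1 := ⟨hx.1.le, le_trans hx.2.le hτ1⟩
      rw [(hW x hxI).deriv]
      have h1 : 0 < q x + k^2 := by
        have := hlb x hxI
        rw [hk2]; linarith
      have h2 : 0 < V x := hVpos x hx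
      have h3 : 0 < w x := by
        rw [hwdef]
        apply Real.sin_pos_of_pos_of_lt_pi (mul_pos hkpos hx.1)
        calc k * x < k * 1 := by
              apply mul_lt_mul_of_pos_left _ hkpos
              exact lt_of_lt_of_le hx.2 hτ1
          _ = k := mul_one k
          _ < Real.pi := hklt
      positivity
  have hWτpos : 0 < W τ := by
    have := hWmono ⟨le_refl _, hτ0.le⟩ ⟨hτ0.le, le_refl _⟩ hτ0
    rwa [hW0] at this
  have hWτ : W τ = Vd τ * Real.sin (k * τ) := by
    simp [hWdef, hwdef, hVτ]
  have hsinτ : 0 < Real.sin (k * τ) := by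
    apply Real.sin_pos_of_pos_of_lt_pi (by positivity)
    calc k * τ ≤ k * 1 := mul_le_mul_of_nonneg_left hτ1 hkpos.le
      _ = k := mul_one k
      _ < Real.pi := hklt
  have hVdτ : 0 < Vd τ := by
    rw [hWτ] at hWτpos
    nlinarith
  -- slope contradiction
  have hder := hV τ
  rw [hasDerivAt_iff_tendsto_slope] at hder
  have hpre : slope V τ ⁻¹' Set.Ioi 0 ∈ nhdsWithin τ {τ}ᶜ :=
    hder (Ioi_mem_nhds hVdτ)
  have hmem : slope V τ ⁻¹' Set.Ioi 0 ∈ nhdsWithin τ (Set.Iio τ) := by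
    apply nhdsWithin_mono τ _ hpre
    intro x hx
    exact ne_of_lt hx
  have hIoo : Set.Ioo 0 τ ∈ nhdsWithin τ (Set.Iio τ) :=
    Ioo_mem_nhdsLT_of_mem ⟨hτ0, le_refl τ⟩
  obtain ⟨u, hu1, hu2⟩ := Filter.nonempty_of_mem (Filter.inter_mem hmem hIoo)
  have hslope : 0 < slope V τ u := hu1
  have hVu : 0 < V u := hVpos u hu2
  rw [slope_def_field, hVτ, sub_zero] at hslope
  have huτ : u - τ < 0 := by linarith [hu2.2]
  have : (V u - 0) / (u - τ) < 0 := div_neg_of_pos_of_neg (by linarith) huτ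
  rw [sub_zero] at this
  have heq : (V u) / (u - τ) = (V u - V τ) / (u - τ) := by rw [hVτ, sub_zero]
  nlinarith [hslope, this]

-- continuity of the x field on [0,1]
lemma H2fun.x_contOn (x : H2fun) : ContinuousOn x.x (Set.Icc (0:ℝ) 1) := by
  have h1 : ContinuousOn (fun t => x.x 0 + ∫ s in (0:ℝ)..t, x.dx s) (Set.Icc (0:ℝ) 1) := by
    apply continuousOn_const.add
    have := intervalIntegral.continuousOn_primitive_interval' x.dx_int
      (left_mem_uIcc (a := (0:ℝ)) (b := 1))
    rwa [Set.uIcc_of_le zero_le_one] at this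
  exact h1.congr (fun t ht => x.x_rep t ht)

-- finite measure instance
noncomputable instance : IsFiniteMeasure (volume.restrict (Set.Ioc (0:ℝ) 1)) := by
  constructor
  rw [Measure.restrict_apply_univ]
  simp [Real.volume_Ioc]

lemma H2fun.ddx_integrableOn (x : H2fun) : IntegrableOn x.ddx (Set.Ioc (0:ℝ) 1) volume :=
  x.ddx_memLp.integrable (by norm_num)

lemma H2fun.ddx_intInt (x : H2fun) {σ : ℝ} (hσ : σ ∈ Set.Icc (0:ℝ) 1) :
    IntervalIntegrable x.ddx volume 0 σ := by
  rw [intervalIntegrable_iff, Set.uIoc_of_le hσ.1]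
  exact x.ddx_integrableOn.mono_set (Set.Ioc_subset_Ioc_right hσ.2)


/-- Under C(c) and C(f_x) (`inf f_x > −π²`), for every fixed `x ∈ 𝕏` and `y ∈ L²(0,1)`
the linear Dirichlet problem `ξ̈(t) = f_x(t,x(t)) ξ(t) + y(t)` a.e. on `[0,1]`,
`ξ(0) = ξ(1) = 0`, has exactly one solution `ξ ∈ 𝕏 = H²(0,1) ∩ H¹₀(0,1)`
(uniqueness meaning any two solutions coincide on `[0,1]`). -/
theorem linear_dirichlet_problem_unique_solution
    (f fx : ℝ → ℝ → ℝ)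
    (hf_cont : ContinuousOn (fun p : ℝ × ℝ => f p.1 p.2) (Set.Icc 0 1 ×ˢ Set.univ))
    (hfx_deriv : ∀ t ∈ Set.Icc (0:ℝ) 1, ∀ z : ℝ, HasDerivAt (fun w => f t w) (fx t z) z)
    (hfx_cont : ContinuousOn (fun p : ℝ × ℝ => fx p.1 p.2) (Set.Icc 0 1 ×ˢ Set.univ))
    (hfx_lb : ∃ m : ℝ, -(Real.pi^2) < m ∧ ∀ t ∈ Set.Icc (0:ℝ) 1, ∀ z : ℝ, m ≤ fx t z)
    (x : Xfun) (y : ℝ → ℝ)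
    (hy : MemLp y 2 (volume.restrict (Set.Ioc (0:ℝ) 1))) :
    (∃ ξ : Xfun,
        ∀ᵐ t ∂(volume.restrict (Set.Ioc (0:ℝ) 1)),
          ξ.ddx t = fx t (x.x t) * ξ.x t + y t) ∧
    (∀ ξ η : Xfun,
        (∀ᵐ t ∂(volume.restrict (Set.Ioc (0:ℝ) 1)),
          ξ.ddx t = fx t (x.x t) * ξ.x t + y t) →
        (∀ᵐ t ∂(volume.restrict (Set.Ioc (0:ℝ) 1)),
          η.ddx t = fx t (x.x t) * η.x t + y t) →
        ∀ t ∈ Set.Icc (0:ℝ) 1, ξ.x t = η.x t) := by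
  classical
  obtain ⟨m, hmgt, hmlb⟩ := hfx_lb
  -- the clamp function
  set cl : ℝ → ℝ := fun t => max 0 (min t 1) with hcldef
  have hcl_cont : Continuous cl := continuous_const.max (continuous_id.min continuous_const)
  have hcl_mem : ∀ t, cl t ∈ Set.Icc (0:ℝ) 1 := by
    intro t
    constructor
    · exact le_max_left _ _
    · exact max_le zero_le_one (min_le_right _ _)
  have hcl_eq : ∀ t ∈ Set.Icc (0:ℝ) 1, cl t = t := by
    intro t ht
    rw [hcldef]
    simp only
    rw [min_eq_left ht.2, max_eq_right ht.1]
  -- the coefficient q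
  have hx_cont            : ContinuousOn x.x (Set.Icc (0:ℝ) 1) := x.toH2fun.x_contOn
  set q : ℝ → ℝ := fun t => fx (cl t) (x.x (cl t)) with hqdef
  have hxcl_cont : Continuous fun t => x.x (cl t) :=
    hx_cont.comp_continuous hcl_cont hcl_mem
  have hq_cont : Continuous q := by
    apply hfx_cont.comp_continuous (hcl_cont.prodMk hxcl_cont)
    intro t
    exact Set.mk_mem_prod (hcl_mem t) (Set.mem_univ _)
  have hq_eq : ∀ t ∈ Set.Icc (0:ℝ) 1, q t = fx t (x.x t) := by
    intro t ht
    rw [hqdef]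
    simp only
    rw [hcl_eq t ht]
  obtain ⟨M, hMb⟩ : ∃ M, ∀ t ∈ Set.Icc (0:ℝ) 1, ‖q t‖ ≤ M :=
    isCompact_Icc.exists_bound_of_continuousOn hq_cont.continuousOn
  have hM : ∀ t, |q t| ≤ M := by
    intro t
    have hidem : q (cl t) = q t := by
      rw [hqdef]
      simp only
      rw [hcl_eq (cl t) (hcl_mem t)]
    calc |q t| = ‖q (cl t)‖ := by rw [hidem, Real.norm_eq_abs]
      _ ≤ M := hMb (cl t) (hcl_mem t)
  have hq_lb : ∀ t ∈ Set.Icc (0:ℝ) 1, m ≤ q t := by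
    intro t ht
    rw [hq_eq t ht]
    exact hmlb t ht _
  -- y facts
  have hy_int : IntegrableOn y (Set.Ioc (0:ℝ) 1) volume := hy.integrable (by norm_num)
  set yi : ℝ → ℝ := (Set.Ioc (0:ℝ) 1).indicator y with hyidef
  have hyi_int : Integrable yi volume := (integrable_indicator_iff measurableSet_Ioc).2 hy_int
  have hyi_eq : ∀ t ∈ Set.Ioc (0:ℝ) 1, yi t = y t := fun t ht => Set.indicator_of_mem ht y
  have hzero_int : Integrable (fun _ : ℝ => (0:ℝ)) volume := integrable_zero _ _ _
  -- the homogeneous solution v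
  obtain ⟨v, hv_cont, hv_eq, hv_uniq⟩ :=
    volterra_solution q (fun _ => 0) hq_cont hM hzero_int 1
  have hv_eq' : ∀ t ∈ Set.Icc (0:ℝ) 1,
      v t = t + ∫ s in (0:ℝ)..t, (t - s) * (q s * v s) := by
    intro t ht
    have := hv_eq t ht
    simpa using this
  -- global C² representative of v
  set g : ℝ → ℝ := fun s => q s * v s with hgdef
  have hg_cont : Continuous g := hq_cont.mul hv_cont
  have hg_int : ∀ a b : ℝ, IntervalIntegrable g volume a b :=
    fun a b => hg_cont.intervalIntegrable a b
  set Vg : ℝ → ℝ := fun t => t + ∫ s in (0:ℝ)..t, (t - s) * g s with hVgdef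
  set VD : ℝ → ℝ := fun t => 1 + ∫ s in (0:ℝ)..t, g s with hVDdef
  have hVg_eq_v : ∀ t ∈ Set.Icc (0:ℝ) 1, Vg t = v t := by
    intro t ht
    rw [hVgdef]
    simp only
    rw [hv_eq' t ht]
  have hVg_der : ∀ t, HasDerivAt Vg (VD t) t := by
    intro t
    have h1 := hasDerivAt_volterra hg_int t
    have := (hasDerivAt_id t).add h1
    exact this
  have hVD_der : ∀ t, HasDerivAt VD (g t) t := by
    intro t
    have h1 : HasDerivAt (fun u => ∫ s in (0:ℝ)..u, g s) (g t) t :=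
      intervalIntegral.integral_hasDerivAt_right (hg_int 0 t)
        (hg_cont.stronglyMeasurableAtFilter _ _) hg_cont.continuousAt
    have h2 := (hasDerivAt_const t (1:ℝ)).add h1
    rw [zero_add] at h2
    exact h2
  have hVg0 : Vg 0 = 0 := by simp [hVgdef]
  have hVD0 : VD 0 = 1 := by simp [hVDdef]
  have hVg1 : Vg 1 ≠ 0 := by
    apply sturm_no_zero q Vg VD m hmgt hq_lb hVg_der _ hVg0 hVD0
    intro t ht
    have : q t * v t = q t * Vg t := by rw [hVg_eq_v t ht]
    rw [← this]
    exact hVD_der t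
  have hv1 : v 1 ≠ 0 := by
    rw [← hVg_eq_v 1 ⟨zero_le_one, le_refl _⟩]
    exact hVg1
  -- particular solution
  obtain ⟨u0, hu0_cont, hu0_eq, _⟩ := volterra_solution q yi hq_cont hM hyi_int 0
  have hu0_eq' : ∀ t ∈ Set.Icc (0:ℝ) 1,
      u0 t = ∫ s in (0:ℝ)..t, (t - s) * (q s * u0 s + yi s) := by
    intro t ht
    have := hu0_eq t ht
    simpa using this
  set B : ℝ := -(u0 1) / (v 1) with hBdef
  set sξ : ℝ → ℝ := fun t => u0 t + B * v t with hsdef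
  have hs_cont : Continuous sξ := hu0_cont.add (continuous_const.mul hv_cont)
  set ddxf : ℝ → ℝ := fun t => q t * sξ t + yi t with hddxdef
  have hddx_int : ∀ a b : ℝ, IntervalIntegrable ddxf volume a b :=
    fun a b => ((hq_cont.mul hs_cont).intervalIntegrable a b).add
      (hyi_int.intervalIntegrable (a := a) (b := b))
  set dxf : ℝ → ℝ := fun t => B + ∫ r in (0:ℝ)..t, ddxf r with hdxdef
  have hdx_cont : Continuous dxf :=
    continuous_const.add (intervalIntegral.continuous_primitive hddx_int 0)
  -- combined fixed point equation
  have hs_eq : ∀ t ∈ Set.Icc (0:ℝ) 1,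
      sξ t = B * t + ∫ s in (0:ℝ)..t, (t - s) * ddxf s := by
    intro t ht
    have h1 := hu0_eq' t ht
    have h2 := hv_eq' t ht
    have hint1 : IntervalIntegrable (fun s => (t - s) * (q s * u0 s + yi s)) volume 0 t :=
      (((hq_cont.mul hu0_cont).intervalIntegrable 0 t).add
        (hyi_int.intervalIntegrable (a := (0:ℝ)) (b := t))).continuousOn_mul (by fun_prop)
    have hint2 : IntervalIntegrable (fun s => B * ((t - s) * (q s * v s))) volume 0 t := by
      apply Continuous.intervalIntegrable
      fun_prop
    calc sξ t = (∫ s in (0:ℝ)..t, (t - s) * (q s * u0 s + yi s))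
          + (B * t + ∫ s in (0:ℝ)..t, B * ((t - s) * (q s * v s))) := by
          rw [hsdef]
          simp only
          rw [h1, h2, intervalIntegral.integral_const_mul]
          ring
      _ = B * t + ∫ s in (0:ℝ)..t,
            ((t - s) * (q s * u0 s + yi s) + B * ((t - s) * (q s * v s))) := by
          rw [intervalIntegral.integral_add hint1 hint2]
          ring
      _ = B * t + ∫ s in (0:ℝ)..t, (t - s) * ddxf s := by
          congr 1
          apply intervalIntegral.integral_congr
          intro s _
          rw [hddxdef, hsdef]
          simp only
          ring
  have hs0 : sξ 0 = 0 := by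
    have h1 : u0 0 = 0 := by
      have := hu0_eq' 0 ⟨le_refl _, zero_le_one⟩
      simpa using this
    have h2 : v 0 = 0 := by
      have := hv_eq' 0 ⟨le_refl _, zero_le_one⟩
      simpa using this
    rw [hsdef]; simp [h1, h2]
  have hs1 : sξ 1 = 0 := by
    rw [hsdef]
    simp only
    rw [hBdef]
    field_simp
    ring
  -- build the Xfun solution
  have hmemLp : MemLp ddxf 2 (volume.restrict (Set.Ioc (0:ℝ) 1)) := by
    apply MemLp.add
    · obtain ⟨C, hC⟩ : ∃ C, ∀ t ∈ Set.Icc (0:ℝ) 1, ‖q t * sξ t‖ ≤ C :=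
        isCompact_Icc.exists_bound_of_continuousOn (hq_cont.mul hs_cont).continuousOn
      apply MemLp.of_bound ((hq_cont.mul hs_cont).aestronglyMeasurable) C
      rw [ae_restrict_iff' measurableSet_Ioc]
      apply ae_of_all
      intro t ht
      exact hC t ⟨ht.1.le, ht.2⟩
    · exact hy.ae_eq (indicator_ae_eq_restrict measurableSet_Ioc).symm
  have hx_rep : ∀ t ∈ Set.Icc (0:ℝ) 1, sξ t = sξ 0 + ∫ s in (0:ℝ)..t, dxf s := by
    intro t ht
    have hprim_cont : Continuous fun σ => ∫ r in (0:ℝ)..σ, ddxf r :=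
      intervalIntegral.continuous_primitive hddx_int 0
    have h1 : ∫ s in (0:ℝ)..t, dxf s
        = B * t + ∫ σ in (0:ℝ)..t, (∫ r in (0:ℝ)..σ, ddxf r) := by
      rw [hdxdef]
      simp only
      rw [intervalIntegral.integral_add (intervalIntegrable_const)
        (hprim_cont.intervalIntegrable 0 t), intervalIntegral.integral_const, sub_zero,
        smul_eq_mul, mul_comm]
    rw [h1, volterra_eq_double hddx_int t, hs0, ← hs_eq t ht]
    ring
  set ξ : Xfun :=
    { x := sξ, dx := dxf, ddx := ddxf
      dx_int := hdx_cont.intervalIntegrable 0 1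
      ddx_memLp := hmemLp
      x_rep := hx_rep
      dx_rep := by
        intro t _
        rw [hdxdef]
        simp
      bc0 := hs0
      bc1 := hs1 } with hξdef
  constructor
  · refine ⟨ξ, ?_⟩
    rw [ae_restrict_iff' measurableSet_Ioc]
    apply ae_of_all
    intro t ht
    show ddxf t = fx t (x.x t) * sξ t + y t
    rw [hddxdef]
    simp only
    rw [hq_eq t ⟨ht.1.le, ht.2⟩, hyi_eq t ht]
  -- uniqueness
  · intro ξ₁ η hξ₁ hη t ht
    set c : ℝ := ξ₁.dx 0 - η.dx 0 with hcdef
    set δ : ℝ → ℝ := fun s => ξ₁.x s - η.x s with hδdef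
    have hδ_cont : ContinuousOn δ (Set.Icc (0:ℝ) 1) :=
      (ξ₁.toH2fun.x_contOn).sub (η.toH2fun.x_contOn)
    set di : ℝ → ℝ := (Set.Ioc (0:ℝ) 1).indicator (fun s => ξ₁.ddx s - η.ddx s) with hdidef
    have hdi_int : Integrable di volume :=
      (integrable_indicator_iff measurableSet_Ioc).2
        ((ξ₁.toH2fun.ddx_integrableOn).sub (η.toH2fun.ddx_integrableOn))
    -- the first derivative difference
    have hstep1 : ∀ σ ∈ Set.Icc (0:ℝ) 1,
        ξ₁.dx σ - η.dx σ = c + ∫ s in (0:ℝ)..σ, di s := by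
      intro σ hσ
      have h1 := ξ₁.dx_rep σ hσ
      have h2 := η.dx_rep σ hσ
      have hsub : ∫ s in (0:ℝ)..σ, di s
          = (∫ s in (0:ℝ)..σ, ξ₁.ddx s) - ∫ s in (0:ℝ)..σ, η.ddx s := by
        rw [← intervalIntegral.integral_sub (ξ₁.toH2fun.ddx_intInt hσ)
          (η.toH2fun.ddx_intInt hσ)]
        apply intervalIntegral.integral_congr_ae
        apply ae_of_all
        intro u hu
        rw [Set.uIoc_of_le hσ.1] at hu
        rw [hdidef]
        have humem : u ∈ Set.Ioc (0:ℝ) 1 := ⟨hu.1, le_trans hu.2 hσ.2⟩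
        exact Set.indicator_of_mem humem _
      rw [h1, h2, hsub, hcdef]
      ring
    -- integral equation for the difference
    have hδ_eq : ∀ τ ∈ Set.Icc (0:ℝ) 1,
        δ τ = c * τ + ∫ s in (0:ℝ)..τ, (τ - s) * (q s * δ s + 0) := by
      intro τ hτ
      have hdxint1 : IntervalIntegrable ξ₁.dx volume 0 τ :=
        ξ₁.dx_int.mono_set (by
          rw [Set.uIcc_of_le hτ.1, Set.uIcc_of_le zero_le_one]
          exact Set.Icc_subset_Icc_right hτ.2)
      have hdxint2 : IntervalIntegrable η.dx volume 0 τ :=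
        η.dx_int.mono_set (by
          rw [Set.uIcc_of_le hτ.1, Set.uIcc_of_le zero_le_one]
          exact Set.Icc_subset_Icc_right hτ.2)
      have hprim_cont : Continuous fun σ => ∫ r in (0:ℝ)..σ, di r :=
        hdi_int.continuous_primitive 0
      have h1 : δ τ = ∫ σ in (0:ℝ)..τ, (ξ₁.dx σ - η.dx σ) := by
        rw [hδdef]
        simp only
        rw [ξ₁.x_rep τ hτ, η.x_rep τ hτ, ξ₁.bc0, η.bc0,
          intervalIntegral.integral_sub hdxint1 hdxint2]
        ring
      have h2 : ∫ σ in (0:ℝ)..τ, (ξ₁.dx σ - η.dx σ)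
          = ∫ σ in (0:ℝ)..τ, (c + ∫ s in (0:ℝ)..σ, di s) := by
        apply intervalIntegral.integral_congr
        intro σ hσ
        rw [Set.uIcc_of_le hτ.1] at hσ
        exact hstep1 σ ⟨hσ.1, le_trans hσ.2 hτ.2⟩
      have h3 : ∫ σ in (0:ℝ)..τ, (c + ∫ s in (0:ℝ)..σ, di s)
          = c * τ + ∫ s in (0:ℝ)..τ, (τ - s) * di s := by
        rw [intervalIntegral.integral_add (intervalIntegrable_const)
          (hprim_cont.intervalIntegrable 0 τ), intervalIntegral.integral_const, sub_zero,
          smul_eq_mul, mul_comm,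
          volterra_eq_double (fun a b => hdi_int.intervalIntegrable) τ]
      have h4 : ∫ s in (0:ℝ)..τ, (τ - s) * di s
          = ∫ s in (0:ℝ)..τ, (τ - s) * (q s * δ s + 0) := by
        apply intervalIntegral.integral_congr_ae
        have haeq := (ae_restrict_iff' measurableSet_Ioc).1 (hξ₁.and hη)
        filter_upwards [haeq] with s hs hmem
        rw [Set.uIoc_of_le hτ.1] at hmem
        have hsIoc : s ∈ Set.Ioc (0:ℝ) 1 := ⟨hmem.1, le_trans hmem.2 hτ.2⟩
        obtain ⟨e1, e2⟩ := hs hsIoc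
        have hdi_s : di s = ξ₁.ddx s - η.ddx s := Set.indicator_of_mem hsIoc _
        rw [hdi_s, e1, e2, hδdef]
        simp only
        rw [hq_eq s ⟨hsIoc.1.le, hsIoc.2⟩]
        ring
      rw [h1, h2, h3, h4]
    -- compare with the scaled homogeneous solution
    obtain ⟨z, hz_cont, hz_eq, hz_uniq⟩ :=
      volterra_solution q (fun _ => 0) hq_cont hM hzero_int c
    have hδz := hz_uniq δ hδ_cont hδ_eq
    have hcv : ∀ τ ∈ Set.Icc (0:ℝ) 1,
        c * v τ = c * τ + ∫ s in (0:ℝ)..τ, (τ - s) * (q s * (c * v s) + 0) := by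
      intro τ hτ
      have h2 := hv_eq' τ hτ
      calc c * v τ = c * τ + c * ∫ s in (0:ℝ)..τ, (τ - s) * (q s * v s) := by
            rw [h2]; ring
        _ = c * τ + ∫ s in (0:ℝ)..τ, c * ((τ - s) * (q s * v s)) := by
            rw [intervalIntegral.integral_const_mul]
        _ = c * τ + ∫ s in (0:ℝ)..τ, (τ - s) * (q s * (c * v s) + 0) := by
            congr 1
            apply intervalIntegral.integral_congr
            intro s _
            ring
    have hcvz := hz_uniq (fun s => c * v s) (continuous_const.mul hv_cont).continuousOn hcv
    have hδ1 : δ 1 = 0 := by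
      rw [hδdef]
      simp only
      rw [ξ₁.bc1, η.bc1, sub_zero]
    have hc0 : c = 0 := by
      have h1 := hδz 1 ⟨zero_le_one, le_refl _⟩
      have h2 : c * v 1 = z 1 := hcvz 1 ⟨zero_le_one, le_refl _⟩
      rw [hδ1] at h1
      have : c * v 1 = 0 := by rw [h2, ← h1]
      rcases mul_eq_zero.1 this with hc | hv
      · exact hc
      · exact absurd hv hv1
    have h1 := hδz t ht
    have h2 : c * v t = z t := hcvz t ht
    have : δ t = 0 := by
      rw [h1, ← h2, hc0, zero_mul]
    have hfin : ξ₁.x t - η.x t = 0 := this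
    linarith [hfin]
end

section
/- Fix N ∈ ℕ, N ≥ 2, let v : [0,1] → ℝ be continuous, and assume f : [0,1] × ℝ → ℝ satisfies: C(c): f is continuous on [0,1] × ℝ with continuous partial derivative f_x with respect to the second variable; D(f): there exist positive constants A, B with A < 1 such that |f(t,x)| ≤ A|x| + B for all t ∈ [0,1], x ∈ ℝ; D(f_x): inf over [0,1] × ℝ of f_x is > −1. Then the discrete Dirichlet problem Δ²x(k−1) = (1/N²) f(k/N, x(k)) + (1/N²) v(k/N) for k = 1,…,N−1, x(0) = x(N) = 0, has a unique solution in 𝔼_N. -/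
open Finset

private lemma DDP_telescope (d : ℕ → ℝ) (M : ℕ) :
    ∑ k ∈ Finset.range M, ((d (k+1) - d k)^2 + d (k+1) * (d (k+2) - 2*d (k+1) + d k))
      = d M * (d (M+1) - d M) - d 0 * (d 1 - d 0) := by
  induction M with
  | zero => simp
  | succ n ih => rw [Finset.sum_range_succ, ih]; ring

private lemma DDP_energy (d : ℕ → ℝ) (M : ℕ) (h0 : d 0 = 0) (hM : d (M+1) = 0) :
    ∑ k ∈ Finset.range (M+1), (d (k+1) - d k)^2
      = - ∑ k ∈ Finset.range M, d (k+1) * (d (k+2) - 2*d (k+1) + d k) := by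
  have h1 := DDP_telescope d M
  rw [Finset.sum_add_distrib, h0, hM] at h1
  rw [Finset.sum_range_succ, hM]
  nlinarith [h1]

private lemma DDP_unique (N : ℕ) (hN : 2 ≤ N) (m : ℝ) (hm : -1 < m) (d : ℕ → ℝ)
    (h0 : d 0 = 0) (hNd : d N = 0)
    (hineq : ∀ k, 1 ≤ k → k < N →
      (m/(N:ℝ)^2) * (d k)^2 ≤ d k * (d (k+1) - 2*d k + d (k-1))) :
    ∀ k, k ≤ N → d k = 0 := by
  obtain ⟨M, rfl⟩ : ∃ M, N = M + 1 := ⟨N - 1, by omega⟩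
  have hNpos : (0:ℝ) < ((M+1:ℕ):ℝ) := by positivity
  set S1 : ℝ := ∑ k ∈ Finset.range (M+1), (d (k+1) - d k)^2 with hS1def
  set S2 : ℝ := ∑ k ∈ Finset.range M, (d (k+1))^2 with hS2def
  have hS1nn : 0 ≤ S1 := Finset.sum_nonneg fun k _ => sq_nonneg _
  have hS2nn : 0 ≤ S2 := Finset.sum_nonneg fun k _ => sq_nonneg _
  have hId : S1 = - ∑ k ∈ Finset.range M, d (k+1) * (d (k+2) - 2*d (k+1) + d k) :=
    DDP_energy d M h0 hNd
  have hterm : ∀ k ∈ Finset.range M,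
      (m/((M+1:ℕ):ℝ)^2) * (d (k+1))^2 ≤ d (k+1) * (d (k+2) - 2*d (k+1) + d k) := by
    intro k hk
    have hkM : k < M := Finset.mem_range.mp hk
    have := hineq (k+1) (by omega) (by omega)
    simpa using this
  have h2 : (m/((M+1:ℕ):ℝ)^2) * S2
      ≤ ∑ k ∈ Finset.range M, d (k+1) * (d (k+2) - 2*d (k+1) + d k) := by
    rw [hS2def, Finset.mul_sum]
    exact Finset.sum_le_sum hterm
  have hS1le : S1 ≤ -((m/((M+1:ℕ):ℝ)^2) * S2) := by rw [hId]; linarith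
  -- Poincaré
  have hpoin : ∀ k ∈ Finset.range M, (d (k+1))^2 ≤ ((M+1:ℕ):ℝ) * S1 := by
    intro k hk
    have hkM : k < M := Finset.mem_range.mp hk
    have hsum : d (k+1) = ∑ j ∈ Finset.range (k+1), (d (j+1) - d j) := by
      rw [Finset.sum_range_sub d (k+1), h0, sub_zero]
    have hcs : (d (k+1))^2 ≤ ((k+1:ℕ):ℝ) * ∑ j ∈ Finset.range (k+1), (d (j+1) - d j)^2 := by
      rw [hsum]
      simpa using sq_sum_le_card_mul_sum_sq (s := Finset.range (k+1))
        (f := fun j => d (j+1) - d j)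
    have hsub : ∑ j ∈ Finset.range (k+1), (d (j+1) - d j)^2 ≤ S1 := by
      apply Finset.sum_le_sum_of_subset_of_nonneg
      · exact Finset.range_subset_range.mpr (by omega)
      · intro i _ _; exact sq_nonneg _
    have hcast : ((k+1:ℕ):ℝ) ≤ ((M+1:ℕ):ℝ) := by exact_mod_cast by omega
    have hSnn : 0 ≤ ∑ j ∈ Finset.range (k+1), (d (j+1) - d j)^2 :=
      Finset.sum_nonneg fun _ _ => sq_nonneg _
    calc (d (k+1))^2 ≤ ((k+1:ℕ):ℝ) * ∑ j ∈ Finset.range (k+1), (d (j+1) - d j)^2 := hcs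
      _ ≤ ((M+1:ℕ):ℝ) * S1 := by
          apply mul_le_mul hcast hsub hSnn (le_of_lt hNpos)
  have hS2le : S2 ≤ ((M+1:ℕ):ℝ)^2 * S1 := by
    calc S2 ≤ ∑ _k ∈ Finset.range M, ((M+1:ℕ):ℝ) * S1 := Finset.sum_le_sum hpoin
      _ = (M:ℝ) * (((M+1:ℕ):ℝ) * S1) := by
          rw [Finset.sum_const, Finset.card_range, nsmul_eq_mul]
      _ ≤ ((M+1:ℕ):ℝ)^2 * S1 := by
          have : (M:ℝ) ≤ ((M+1:ℕ):ℝ) := by exact_mod_cast by omega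
          nlinarith [mul_nonneg hNpos.le hS1nn]
  -- conclude S1 = 0
  have hS1z : S1 = 0 := by
    have hN2 : (0:ℝ) < ((M+1:ℕ):ℝ)^2 := by positivity
    have h3 : ((M+1:ℕ):ℝ)^2 * S1 ≤ -m * S2 := by
      have := mul_le_mul_of_nonneg_left hS1le hN2.le
      calc ((M+1:ℕ):ℝ)^2 * S1 ≤ ((M+1:ℕ):ℝ)^2 * -((m/((M+1:ℕ):ℝ)^2) * S2) := this
        _ = -m * S2 := by field_simp
    have h4 : S2 ≤ -m * S2 := le_trans hS2le h3
    have h5 : S2 = 0 := by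
      rcases eq_or_lt_of_le hS2nn with h|h
      · exact h.symm
      · nlinarith [mul_pos (show (0:ℝ) < 1+m by linarith) h]
    have h6 : S1 ≤ 0 := by nlinarith [h3, hN2]
    exact le_antisymm h6 hS1nn
  -- each difference is zero
  have hdz : ∀ k ∈ Finset.range (M+1), (d (k+1) - d k)^2 = 0 := by
    rw [hS1def] at hS1z
    exact (Finset.sum_eq_zero_iff_of_nonneg (fun i _ => sq_nonneg _)).mp hS1z
  have hstep : ∀ k, k < M+1 → d (k+1) = d k := by
    intro k hk
    have := hdz k (Finset.mem_range.mpr hk)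
    have := pow_eq_zero_iff (n := 2) (by norm_num) |>.mp this
    linarith
  intro k hk
  induction k with
  | zero => exact h0
  | succ n ih => rw [hstep n (by omega)]; exact ih (by omega)

private lemma DDP_mvt (f : ℝ → ℝ → ℝ) (fx : ℝ → ℝ → ℝ) (m : ℝ) (t : ℝ)
    (hder : ∀ z, HasDerivAt (fun w => f t w) (fx t z) z)
    (hlb : ∀ z, m ≤ fx t z) (a b : ℝ) :
    m * (a - b)^2 ≤ (f t a - f t b) * (a - b) := by
  have hD : ∀ z, HasDerivAt (fun w => f t w - m * w) (fx t z - m) z := by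
    intro z
    have h2 : HasDerivAt (fun w : ℝ => m * w) (m * 1) z := (hasDerivAt_id z).const_mul m
    have h3 := (hder z).sub h2
    rw [mul_one] at h3
    exact h3
  have hmono : Monotone (fun w => f t w - m * w) := by
    apply monotone_of_deriv_nonneg
    · exact fun z => (hD z).differentiableAt
    · intro z
      rw [(hD z).deriv]
      linarith [hlb z]
  rcases le_total b a with h | h
  · have := hmono h
    simp only at this
    nlinarith [this, sub_nonneg.mpr h]
  · have := hmono h
    simp only at this
    nlinarith [this, sub_nonneg.mpr h]

private lemma DDP_convex (N : ℕ) (w : ℕ → ℝ)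
    (hconv : ∀ k, 1 ≤ k → k < N → 0 ≤ w (k+1) - 2*w k + w (k-1))
    (h0 : w 0 ≤ 0) (hN : w N ≤ 0) : ∀ k, k ≤ N → w k ≤ 0 := by
  set p : ℕ → ℝ := fun k => w (k+1) - w k with hpdef
  have hmono : ∀ j, j < N → ∀ i, i ≤ j → p i ≤ p j := by
    intro j
    induction j with
    | zero => intro _ i hi; interval_cases i; exact le_rfl
    | succ n ih =>
      intro hjN i hi
      have hstep : p n ≤ p (n+1) := by
        have h := hconv (n+1) (by omega) hjN
        simp only [hpdef, Nat.add_sub_cancel] at h ⊢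
        linarith
      rcases Nat.lt_succ_iff_lt_or_eq.mp (Nat.lt_succ_of_le hi) with h | h
      · exact le_trans (ih (by omega) i (by omega)) hstep
      · exact h ▸ le_rfl
  intro k hk
  rcases Nat.eq_zero_or_pos k with rfl | hk1
  · exact h0
  rcases eq_or_lt_of_le hk with rfl | hkN
  · exact hN
  -- now 1 ≤ k < N
  have hup : w k - w 0 ≤ (k:ℝ) * p (k-1) := by
    have e : w k - w 0 = ∑ j ∈ Finset.range k, p j := (Finset.sum_range_sub w k).symm
    rw [e]
    calc ∑ j ∈ Finset.range k, p j ≤ ∑ _j ∈ Finset.range k, p (k-1) := by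
          apply Finset.sum_le_sum
          intro j hj
          have hjk := Finset.mem_range.mp hj
          exact hmono (k-1) (by omega) j (by omega)
      _ = (k:ℝ) * p (k-1) := by rw [Finset.sum_const, Finset.card_range, nsmul_eq_mul]
  have hdown : ((N:ℝ) - k) * p (k-1) ≤ w N - w k := by
    have e : w N - w k = ∑ j ∈ Finset.Ico k N, p j := by
      rw [Finset.sum_Ico_eq_sub _ (le_of_lt hkN), Finset.sum_range_sub w, Finset.sum_range_sub w]
      ring
    rw [e]
    calc ((N:ℝ) - k) * p (k-1) = ((N - k : ℕ):ℝ) * p (k-1) := by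
          rw [Nat.cast_sub (le_of_lt hkN)]
      _ = ∑ _j ∈ Finset.Ico k N, p (k-1) := by
          rw [Finset.sum_const, Nat.card_Ico, nsmul_eq_mul]
      _ ≤ ∑ j ∈ Finset.Ico k N, p j := by
          apply Finset.sum_le_sum
          intro j hj
          obtain ⟨hj1, hj2⟩ := Finset.mem_Ico.mp hj
          exact hmono j hj2 (k-1) (by omega)
  have hkr : (1:ℝ) ≤ (k:ℝ) := by exact_mod_cast hk1
  have hNk : (1:ℝ) ≤ (N:ℝ) - k := by
    have : (k:ℝ) + 1 ≤ (N:ℝ) := by exact_mod_cast hkN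
    linarith
  have hNwk : (N:ℝ) * w k ≤ ((N:ℝ) - k) * w 0 + (k:ℝ) * w N := by
    nlinarith [mul_le_mul_of_nonneg_left hup (by linarith : (0:ℝ) ≤ (N:ℝ) - k),
      mul_le_mul_of_nonneg_left hdown (by linarith : (0:ℝ) ≤ (k:ℝ))]
  have hNr : (0:ℝ) < (N:ℝ) := by linarith
  nlinarith [mul_nonneg (by linarith : (0:ℝ) ≤ (N:ℝ) - k) (neg_nonneg.mpr h0),
    mul_nonneg (by linarith : (0:ℝ) ≤ (k:ℝ)) (neg_nonneg.mpr hN)]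

private lemma DDP_apriori_le (N : ℕ) (hN : 1 ≤ N) (x h : ℕ → ℝ) (H : ℝ) (hH : 0 ≤ H)
    (hx0 : x 0 = 0)
    (heq : ∀ k, 1 ≤ k → k < N → x (k+1) - 2*x k + x (k-1) = h k)
    (hhb : ∀ k, 1 ≤ k → k < N → |h k| ≤ H) :
    ∀ k, k ≤ N → x k ≤ |x N| + H * (N:ℝ)^2 / 8 := by
  have hNr : (0:ℝ) < (N:ℝ) := by exact_mod_cast hN
  set w : ℕ → ℝ := fun k => x k - (k:ℝ)/(N:ℝ) * x N + (H/2) * ((k:ℝ)^2 - (N:ℝ)*(k:ℝ))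
    with hwdef
  have hw0 : w 0 ≤ 0 := by simp [hwdef, hx0]
  have hwN : w N ≤ 0 := by
    simp only [hwdef]
    have : (N:ℝ)/(N:ℝ) = 1 := div_self (ne_of_gt hNr)
    rw [this]
    ring_nf
    exact le_refl 0
  have hconv : ∀ k, 1 ≤ k → k < N → 0 ≤ w (k+1) - 2*w k + w (k-1) := by
    intro k hk1 hkN
    have hc : ((k-1 : ℕ):ℝ) = (k:ℝ) - 1 := by
      rw [Nat.cast_sub hk1, Nat.cast_one]
    have e1 : w (k+1) - 2*w k + w (k-1) = (x (k+1) - 2*x k + x (k-1)) + H := by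
      simp only [hwdef, hc]
      push_cast
      ring
    rw [e1, heq k hk1 hkN]
    have := hhb k hk1 hkN
    have := neg_abs_le (h k)
    linarith
  intro k hk
  have hwk := DDP_convex N w hconv hw0 hwN k hk
  have hkr : (0:ℝ) ≤ (k:ℝ) := Nat.cast_nonneg k
  have hkN : (k:ℝ) ≤ (N:ℝ) := by exact_mod_cast hk
  have h1 : (k:ℝ)/(N:ℝ) * x N ≤ |x N| := by
    have h01 : (k:ℝ)/(N:ℝ) ≤ 1 := by rw [div_le_one hNr]; exact hkN
    have h00 : 0 ≤ (k:ℝ)/(N:ℝ) := by positivity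
    calc (k:ℝ)/(N:ℝ) * x N ≤ (k:ℝ)/(N:ℝ) * |x N| :=
          mul_le_mul_of_nonneg_left (le_abs_self _) h00
      _ ≤ 1 * |x N| := mul_le_mul_of_nonneg_right h01 (abs_nonneg _)
      _ = |x N| := one_mul _
  have h2 : (H/2) * ((N:ℝ)*(k:ℝ) - (k:ℝ)^2) ≤ H * (N:ℝ)^2 / 8 := by
    nlinarith [sq_nonneg ((N:ℝ) - 2*(k:ℝ)), hH]
  simp only [hwdef] at hwk
  linarith

private lemma DDP_apriori (N : ℕ) (hN : 1 ≤ N) (x h : ℕ → ℝ) (H : ℝ) (hH : 0 ≤ H)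
    (hx0 : x 0 = 0)
    (heq : ∀ k, 1 ≤ k → k < N → x (k+1) - 2*x k + x (k-1) = h k)
    (hhb : ∀ k, 1 ≤ k → k < N → |h k| ≤ H) :
    ∀ k, k ≤ N → |x k| ≤ |x N| + H * (N:ℝ)^2 / 8 := by
  intro k hk
  have hup := DDP_apriori_le N hN x h H hH hx0 heq hhb k hk
  have hdn := DDP_apriori_le N hN (fun j => -x j) (fun j => -h j) H hH (by simp [hx0])
    (fun j hj1 hjN => by rw [← heq j hj1 hjN]; ring)
    (fun j hj1 hjN => by simpa using hhb j hj1 hjN) k hk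
  simp only [abs_neg] at hdn
  rw [abs_le]
  constructor <;> linarith

private def DDP_shoot (g : ℕ → ℝ → ℝ) (s : ℝ) : ℕ → ℝ
  | 0 => 0
  | 1 => s
  | (k+2) => 2 * DDP_shoot g s (k+1) - DDP_shoot g s k + g (k+1) (DDP_shoot g s (k+1))

private lemma DDP_shoot_zero (g : ℕ → ℝ → ℝ) (s : ℝ) : DDP_shoot g s 0 = 0 := rfl
private lemma DDP_shoot_one (g : ℕ → ℝ → ℝ) (s : ℝ) : DDP_shoot g s 1 = s := rfl

private lemma DDP_shoot_rec (g : ℕ → ℝ → ℝ) (s : ℝ) (k : ℕ) (hk : 1 ≤ k) :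
    DDP_shoot g s (k+1) - 2 * DDP_shoot g s k + DDP_shoot g s (k-1)
      = g k (DDP_shoot g s k) := by
  obtain ⟨j, rfl⟩ : ∃ j, k = j + 1 := ⟨k - 1, by omega⟩
  show DDP_shoot g s (j+2) - 2 * DDP_shoot g s (j+1) + DDP_shoot g s j = _
  rw [show DDP_shoot g s (j+2)
      = 2 * DDP_shoot g s (j+1) - DDP_shoot g s j + g (j+1) (DDP_shoot g s (j+1)) from rfl]
  ring

private lemma DDP_shoot_cont (g : ℕ → ℝ → ℝ) (hg : ∀ k, Continuous fun y => g k y) (k : ℕ) :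
    Continuous fun s => DDP_shoot g s k := by
  suffices h : ∀ k, Continuous (fun s => DDP_shoot g s k) ∧
      Continuous (fun s => DDP_shoot g s (k+1)) from (h k).1
  intro k
  induction k with
  | zero =>
    constructor
    · simpa [DDP_shoot_zero] using continuous_const
    · simpa [DDP_shoot_one] using continuous_id'
  | succ n ih =>
    refine ⟨ih.2, ?_⟩
    have e : (fun s => DDP_shoot g s (n+2))
        = fun s => 2 * DDP_shoot g s (n+1) - DDP_shoot g s n + g (n+1) (DDP_shoot g s (n+1)) :=
      rfl
    rw [e]
    exact ((continuous_const.mul ih.2).sub ih.1).add ((hg (n+1)).comp ih.2)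

/-- **Solvability of the discrete Dirichlet problem.**
Fix `N ≥ 2`, let `v : [0,1] → ℝ` be continuous and let `f : [0,1] × ℝ → ℝ` satisfy
C(c): `f` is continuous on `[0,1] × ℝ` with continuous partial derivative `fx` in the
second variable;
D(f): there are constants `0 < A < 1`, `0 < B` with `|f(t,x)| ≤ A|x| + B`;
D(f_x): `inf f_x > −1`.
Then the discrete problem
`Δ²x(k−1) = (1/N²) f(k/N, x(k)) + (1/N²) v(k/N)` for `k = 1,…,N−1`, `x(0) = x(N) = 0`,
has a unique solution in `𝔼_N` (functions on `{0,…,N}` vanishing at the ends, modelled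
as functions on `ℤ` extended by `0`). -/
theorem discrete_dirichlet_problem_unique_solution
    (N : ℕ) (hN : 2 ≤ N) (f fx : ℝ → ℝ → ℝ) (v : ℝ → ℝ)
    (hv : ContinuousOn v (Set.Icc (0:ℝ) 1))
    (hf_cont : ContinuousOn (fun p : ℝ × ℝ => f p.1 p.2) (Set.Icc 0 1 ×ˢ Set.univ))
    (hfx_deriv : ∀ t ∈ Set.Icc (0:ℝ) 1, ∀ z : ℝ, HasDerivAt (fun w => f t w) (fx t z) z)
    (hfx_cont : ContinuousOn (fun p : ℝ × ℝ => fx p.1 p.2) (Set.Icc 0 1 ×ˢ Set.univ))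
    (A B : ℝ) (hA : 0 < A) (hB : 0 < B) (hAlt : A < 1)
    (hgrowth : ∀ t ∈ Set.Icc (0:ℝ) 1, ∀ z : ℝ, |f t z| ≤ A * |z| + B)
    (hfx_lb : ∃ m : ℝ, -1 < m ∧ ∀ t ∈ Set.Icc (0:ℝ) 1, ∀ z : ℝ, m ≤ fx t z) :
    ∃! x : ℤ → ℝ,
      x 0 = 0 ∧ x (N:ℤ) = 0 ∧ (∀ k : ℤ, (k < 0 ∨ (N:ℤ) < k) → x k = 0) ∧
      ∀ k : ℤ, 1 ≤ k → k ≤ (N:ℤ) - 1 →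
        x (k+1) - 2 * x k + x (k-1)
          = (1/(N:ℝ)^2) * f ((k:ℝ)/(N:ℝ)) (x k) + (1/(N:ℝ)^2) * v ((k:ℝ)/(N:ℝ)) := by
  obtain ⟨m, hm1, hm2⟩ := hfx_lb
  have hNr : (0:ℝ) < (N:ℝ) := by exact_mod_cast (by omega : 0 < N)
  have hN2pos : (0:ℝ) < 1/(N:ℝ)^2 := by positivity
  obtain ⟨V, hV⟩ : ∃ V, ∀ t ∈ Set.Icc (0:ℝ) 1, ‖v t‖ ≤ V :=
    isCompact_Icc.exists_bound_of_continuousOn hv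
  simp only [Real.norm_eq_abs] at hV
  have hV0 : 0 ≤ V := le_trans (abs_nonneg _) (hV 0 (by norm_num))
  set C : ℝ := B + V with hCdef
  have hC0 : 0 < C := by simp only [hCdef]; linarith
  set g : ℕ → ℝ → ℝ :=
    fun k y => (1/(N:ℝ)^2) * (f (min ((k:ℝ)/(N:ℝ)) 1) y + v (min ((k:ℝ)/(N:ℝ)) 1)) with hgdef
  have htmem : ∀ k : ℕ, min ((k:ℝ)/(N:ℝ)) 1 ∈ Set.Icc (0:ℝ) 1 := by
    intro k
    constructor
    · exact le_min (by positivity) zero_le_one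
    · exact min_le_right _ _
  have htk : ∀ k : ℕ, k ≤ N → min ((k:ℝ)/(N:ℝ)) 1 = (k:ℝ)/(N:ℝ) := by
    intro k hk
    apply min_eq_left
    rw [div_le_one hNr]
    exact_mod_cast hk
  have hfcont1 : ∀ t ∈ Set.Icc (0:ℝ) 1, Continuous fun y => f t y := by
    intro t ht
    rw [← continuousOn_univ]
    have hmap : Set.MapsTo (fun y : ℝ => (t, y)) Set.univ (Set.Icc 0 1 ×ˢ Set.univ) :=
      fun y _ => ⟨ht, trivial⟩
    exact hf_cont.comp ((continuous_const.prodMk continuous_id).continuousOn) hmap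
  have hgcont : ∀ k, Continuous fun y => g k y := by
    intro k
    exact continuous_const.mul (((hfcont1 _ (htmem k))).add continuous_const)
  have hgbound : ∀ (k : ℕ) (y : ℝ), |g k y| ≤ (1/(N:ℝ)^2) * (A * |y| + C) := by
    intro k y
    simp only [hgdef]
    rw [abs_mul, abs_of_pos hN2pos]
    apply mul_le_mul_of_nonneg_left _ hN2pos.le
    calc |f (min ((k:ℝ)/(N:ℝ)) 1) y + v (min ((k:ℝ)/(N:ℝ)) 1)|
        ≤ |f (min ((k:ℝ)/(N:ℝ)) 1) y| + |v (min ((k:ℝ)/(N:ℝ)) 1)| := abs_add_le _ _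
      _ ≤ (A * |y| + B) + V := add_le_add (hgrowth _ (htmem k) y) (hV _ (htmem k))
      _ = A * |y| + C := by simp only [hCdef]; ring
  -- uniqueness engine
  have key_unique : ∀ x y : ℕ → ℝ, x 0 = y 0 → x N = y N →
      (∀ k, 1 ≤ k → k < N →
        (x (k+1) - 2*x k + x (k-1)) - (y (k+1) - 2*y k + y (k-1))
          = (1/(N:ℝ)^2) * (f ((k:ℝ)/(N:ℝ)) (x k) - f ((k:ℝ)/(N:ℝ)) (y k))) →
      ∀ k, k ≤ N → x k = y k := by
    intro x y h0 hNe heq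
    have hres := DDP_unique N hN m hm1 (fun k => x k - y k) (by simp [h0]) (by simp [hNe]) ?_
    · intro k hk
      have := hres k hk
      linarith
    intro k hk1 hkN
    have ht : (k:ℝ)/(N:ℝ) ∈ Set.Icc (0:ℝ) 1 := by
      constructor
      · positivity
      · rw [div_le_one hNr]; exact_mod_cast le_of_lt hkN
    have hmvt := DDP_mvt f fx m ((k:ℝ)/(N:ℝ)) (hfx_deriv _ ht) (fun z => hm2 _ ht z) (x k) (y k)
    have heqk := heq k hk1 hkN
    have h3 : (x (k+1) - y (k+1)) - 2*(x k - y k) + (x (k-1) - y (k-1))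
        = (1/(N:ℝ)^2) * (f ((k:ℝ)/(N:ℝ)) (x k) - f ((k:ℝ)/(N:ℝ)) (y k)) := by
      linarith [heqk]
    have h4 := mul_le_mul_of_nonneg_left hmvt hN2pos.le
    calc m/(N:ℝ)^2 * (x k - y k)^2
        = (1/(N:ℝ)^2) * (m * (x k - y k)^2) := by ring
      _ ≤ (1/(N:ℝ)^2) * ((f ((k:ℝ)/(N:ℝ)) (x k) - f ((k:ℝ)/(N:ℝ)) (y k)) * (x k - y k)) := h4
      _ = (x k - y k) * ((1/(N:ℝ)^2) * (f ((k:ℝ)/(N:ℝ)) (x k) - f ((k:ℝ)/(N:ℝ)) (y k))) := by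
          ring
      _ = (x k - y k) * ((x (k+1) - y (k+1)) - 2*(x k - y k) + (x (k-1) - y (k-1))) := by
          rw [h3]
  -- shooting equation with explicit f and v
  have hNrec : ∀ (s : ℝ) (k : ℕ), 1 ≤ k → k < N →
      DDP_shoot g s (k+1) - 2 * DDP_shoot g s k + DDP_shoot g s (k-1)
        = (1/(N:ℝ)^2) * f ((k:ℝ)/(N:ℝ)) (DDP_shoot g s k)
          + (1/(N:ℝ)^2) * v ((k:ℝ)/(N:ℝ)) := by
    intro s k hk1 hkN
    rw [DDP_shoot_rec g s k hk1]
    simp only [hgdef, htk k (le_of_lt hkN)]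
    ring
  -- a priori bound
  have hapriori : ∀ s : ℝ, (8 - A) * |s| ≤ 8 * |DDP_shoot g s N| + C := by
    intro s
    obtain ⟨k₀, hk₀mem, hk₀max⟩ := Finset.exists_max_image (Finset.range (N+1))
      (fun k => |DDP_shoot g s k|) ⟨0, by simp⟩
    set K := |DDP_shoot g s k₀| with hKdef
    have hKnn : 0 ≤ K := abs_nonneg _
    have hbound : ∀ k, k ≤ N → |DDP_shoot g s k| ≤ K := by
      intro k hk
      exact hk₀max k (Finset.mem_range.mpr (by omega))
    have hH0 : 0 ≤ (1/(N:ℝ)^2) * (A*K + C) := by positivity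
    have hap := DDP_apriori N (by omega) (fun k => DDP_shoot g s k)
      (fun k => g k (DDP_shoot g s k)) ((1/(N:ℝ)^2) * (A*K + C)) hH0
      (DDP_shoot_zero g s)
      (fun k hk1 _ => DDP_shoot_rec g s k hk1)
      (fun k hk1 hkN => by
        calc |g k (DDP_shoot g s k)| ≤ (1/(N:ℝ)^2) * (A * |DDP_shoot g s k| + C) :=
              hgbound k _
          _ ≤ (1/(N:ℝ)^2) * (A*K + C) := by
              apply mul_le_mul_of_nonneg_left _ hN2pos.le
              have := hbound k (le_of_lt hkN)
              nlinarith)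
    have hKb := hap k₀ (by have := Finset.mem_range.mp hk₀mem; omega)
    have e : (1/(N:ℝ)^2) * (A*K + C) * (N:ℝ)^2 / 8 = (A*K + C)/8 := by
      field_simp
    rw [e] at hKb
    have hs1 : |s| ≤ K := by
      have := hbound 1 (by omega)
      rwa [DDP_shoot_one] at this
    rw [← hKdef] at hKb
    nlinarith [hs1, hKb, hKnn, abs_nonneg (DDP_shoot g s N)]
  set Φ : ℝ → ℝ := fun s => DDP_shoot g s N with hΦdef
  have hΦc : Continuous Φ := DDP_shoot_cont g hgcont N
  have hΦinj : Function.Injective Φ := by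
    intro s s' hss
    have hres := key_unique (fun k => DDP_shoot g s k) (fun k => DDP_shoot g s' k)
      (by simp [DDP_shoot_zero]) hss
      (fun k hk1 hkN => by
        rw [hNrec s k hk1 hkN, hNrec s' k hk1 hkN]
        ring) 1 (by omega)
    simpa [DDP_shoot_one] using hres
  -- find a root of Φ
  have h8A : (0:ℝ) < 8 - A := by linarith
  set s₀ : ℝ := (8*|Φ 0| + 16 + C)/(8-A) with hs₀def
  have hs₀pos : 0 < s₀ := by
    apply div_pos _ h8A
    have := abs_nonneg (Φ 0)
    linarith
  have hs₀eq : (8-A) * s₀ = 8*|Φ 0| + 16 + C := by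
    rw [hs₀def, mul_div_cancel₀ _ (ne_of_gt h8A)]
  have h1 : |Φ 0| + 1 ≤ |Φ s₀| := by
    have hap := hapriori s₀
    rw [abs_of_pos hs₀pos] at hap
    have hap' : (8 - A) * s₀ ≤ 8 * |Φ s₀| + C := hap
    linarith
  have h1' : |Φ 0| + 1 ≤ |Φ (-s₀)| := by
    have hap := hapriori (-s₀)
    rw [abs_neg, abs_of_pos hs₀pos] at hap
    have hap' : (8 - A) * s₀ ≤ 8 * |Φ (-s₀)| + C := hap
    linarith
  have hroot : ∃ u, Φ u = 0 := by
    rcases hΦc.strictMono_of_inj hΦinj with hmono | hanti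
    · have hm0 : Φ (-s₀) < Φ 0 := hmono (by linarith)
      have hm1' : Φ 0 < Φ s₀ := hmono hs₀pos
      have hneg : Φ (-s₀) ≤ 0 := by
        by_contra h
        push_neg at h
        have := abs_of_pos h
        have := le_abs_self (Φ 0)
        linarith
      have hpos : 0 ≤ Φ s₀ := by
        by_contra h
        push_neg at h
        have := abs_of_neg h
        have := neg_abs_le (Φ 0)
        linarith
      obtain ⟨u, _, hu⟩ := intermediate_value_Icc (by linarith : -s₀ ≤ s₀)
        hΦc.continuousOn ⟨hneg, hpos⟩
      exact ⟨u, hu⟩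
    · have hm0 : Φ 0 < Φ (-s₀) := hanti (by linarith)
      have hm1' : Φ s₀ < Φ 0 := hanti hs₀pos
      have hneg : Φ s₀ ≤ 0 := by
        by_contra h
        push_neg at h
        have := abs_of_pos h
        have := le_abs_self (Φ 0)
        linarith
      have hpos : 0 ≤ Φ (-s₀) := by
        by_contra h
        push_neg at h
        have := abs_of_neg h
        have := neg_abs_le (Φ 0)
        linarith
      obtain ⟨u, _, hu⟩ := intermediate_value_Icc' (by linarith : -s₀ ≤ s₀)
        hΦc.continuousOn ⟨hneg, hpos⟩
      exact ⟨u, hu⟩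
  obtain ⟨u, hu⟩ := hroot
  -- the solution
  set xZ : ℤ → ℝ := fun k => if 0 ≤ k ∧ k ≤ (N:ℤ) then DDP_shoot g u k.toNat else 0 with hxZdef
  have hxZnat : ∀ i : ℕ, i ≤ N → xZ (i:ℤ) = DDP_shoot g u i := by
    intro i hi
    simp only [hxZdef]
    rw [if_pos ⟨Int.natCast_nonneg i, by exact_mod_cast hi⟩, Int.toNat_natCast]
  have hxZout : ∀ k : ℤ, (k < 0 ∨ (N:ℤ) < k) → xZ k = 0 := by
    intro k hk
    simp only [hxZdef]
    rw [if_neg (by omega)]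
  refine ⟨xZ, ⟨?_, ?_, hxZout, ?_⟩, ?_⟩
  · have := hxZnat 0 (by omega)
    simpa [DDP_shoot_zero] using this
  · have := hxZnat N le_rfl
    rw [this]
    exact hu
  · intro k hk1 hkN
    obtain ⟨j, rfl⟩ : ∃ j : ℕ, k = (j:ℤ) := ⟨k.toNat, (Int.toNat_of_nonneg (by omega)).symm⟩
    have hj1 : 1 ≤ j := by exact_mod_cast hk1
    have hjN : j < N := by
      have : (j:ℤ) + 1 ≤ (N:ℤ) := by omega
      exact_mod_cast this
    have e1 : ((j:ℤ))+1 = ((j+1 : ℕ) : ℤ) := by push_cast; ring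
    have e2 : ((j:ℤ))-1 = ((j-1 : ℕ) : ℤ) := by
      rw [Nat.cast_sub hj1]; push_cast; ring
    rw [e1, e2, hxZnat (j+1) (by omega), hxZnat j (by omega), hxZnat (j-1) (by omega)]
    have := hNrec u j hj1 hjN
    convert this using 3 <;> push_cast <;> ring
  · intro y hy
    obtain ⟨hy0, hyN, hyout, hyeq⟩ := hy
    have hynat : ∀ i : ℕ, i ≤ N → y (i:ℤ) = DDP_shoot g u i := by
      have := key_unique (fun i => y (i:ℤ)) (fun i => DDP_shoot g u i)
        (by simpa [DDP_shoot_zero] using hy0)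
        (by show y (N:ℤ) = DDP_shoot g u N; rw [hyN]; exact hu.symm)
        ?_
      · exact this
      intro i hi1 hiN
      have hie : ((i:ℤ):ℝ) = (i:ℝ) := by push_cast; ring
      have hyeqi := hyeq (i:ℤ) (by exact_mod_cast hi1) (by
        have : (i:ℤ) + 1 ≤ (N:ℤ) := by exact_mod_cast Nat.succ_le_of_lt hiN
        omega)
      have e1 : ((i:ℤ))+1 = ((i+1 : ℕ) : ℤ) := by push_cast; ring
      have e2 : ((i:ℤ))-1 = ((i-1 : ℕ) : ℤ) := by
        rw [Nat.cast_sub hi1]; push_cast; ring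
      rw [e1, e2] at hyeqi
      have hrec := hNrec u i hi1 hiN
      rw [hie] at hyeqi
      rw [hyeqi, hrec]
      ring
    funext k
    by_cases hk : 0 ≤ k ∧ k ≤ (N:ℤ)
    · obtain ⟨j, rfl⟩ : ∃ j : ℕ, k = (j:ℤ) := ⟨k.toNat, (Int.toNat_of_nonneg hk.1).symm⟩
      have hj : j ≤ N := by exact_mod_cast hk.2
      rw [hynat j hj, hxZnat j hj]
    · push_neg at hk
      have hout : k < 0 ∨ (N:ℤ) < k := by omega
      rw [hyout k hout, hxZout k hout]
end
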